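/- arXiv:0806.0697 — 6 statements merged into one kernel-verified Lean document; each statement's English description precedes it below -/
import Mathlib

section
/- Let M be a finitely generated module over O/ϖ^m O. Then M is a free O/ϖ^m O-module if and only if for every x ∈ M with ϖ·x = 0 there exists y ∈ M such that x = ϖ^{m−1}·y. -/
open scoped TensorProduct


/-!
Freeness criterion over `O/ϖ^m O` (from the proof of Lemma 4.2 of the paper):
a finitely generated module `M` over `O/ϖ^m O` is free if and only if
every `x ∈ M` killed by `ϖ` is of the form `ϖ^(m-1) • y`.
-/

theorem stmt0 {O : Type*} [CommRing O] [IsDomain O] [IsDiscreteValuationRing O]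
    (ϖ : O) (hϖ : Irreducible ϖ) (m : ℕ) (hm : 1 ≤ m)
    (M : Type*) [AddCommGroup M] [Module (O ⧸ Ideal.span {ϖ ^ m}) M]
    [Module.Finite (O ⧸ Ideal.span {ϖ ^ m}) M] :
    Module.Free (O ⧸ Ideal.span {ϖ ^ m}) M ↔
      ∀ x : M, (Ideal.Quotient.mk (Ideal.span {ϖ ^ m}) ϖ) • x = 0 →
        ∃ y : M, x = (Ideal.Quotient.mk (Ideal.span {ϖ ^ m}) ϖ) ^ (m - 1) • y := by
  set R := O ⧸ Ideal.span {ϖ ^ m} with hR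
  set π : R := Ideal.Quotient.mk (Ideal.span {ϖ ^ m}) ϖ with hπdef
  have hϖ0 : ϖ ≠ 0 := hϖ.ne_zero
  have hmm : m - 1 + 1 = m := Nat.succ_pred_eq_of_pos hm
  -- `π ^ m = 0` in `R`.
  have hπm : π ^ m = 0 := by
    rw [hπdef, ← map_pow, Ideal.Quotient.eq_zero_iff_mem]
    exact Ideal.subset_span rfl
  -- the ideal is proper
  have htop : Ideal.span {ϖ ^ m} ≠ ⊤ := by
    rw [Ne, Ideal.span_singleton_eq_top]
    intro hu
    exact hϖ.not_isUnit (isUnit_of_dvd_unit (dvd_pow_self ϖ (by omega)) hu)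
  haveI : Nontrivial R := Ideal.Quotient.nontrivial_iff.mpr htop
  haveI : IsLocalRing R :=
    IsLocalRing.of_surjective' (Ideal.Quotient.mk _) Ideal.Quotient.mk_surjective
  -- annihilator of `π` in `R` is generated by `π ^ (m-1)`
  have hann : ∀ a : R, π * a = 0 → ∃ c : R, a = π ^ (m - 1) * c := by
    intro a ha
    obtain ⟨a', rfl⟩ := Ideal.Quotient.mk_surjective a
    rw [hπdef, ← map_mul, Ideal.Quotient.eq_zero_iff_mem, Ideal.mem_span_singleton] at ha
    obtain ⟨c, hc⟩ := ha
    refine ⟨Ideal.Quotient.mk _ c, ?_⟩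
    have hpow : ϖ ^ m = ϖ * ϖ ^ (m - 1) := by
      conv_lhs => rw [← hmm]
      rw [pow_succ, mul_comm]
    have : ϖ * a' = ϖ * (ϖ ^ (m - 1) * c) := by rw [hc, hpow, mul_assoc]
    have ha' : a' = ϖ ^ (m - 1) * c := mul_left_cancel₀ hϖ0 this
    rw [ha', map_mul, map_pow, hπdef]
  -- every element of the maximal ideal of `R` is a multiple of `π`
  have hdvd : ∀ r : R, r ∈ IsLocalRing.maximalIdeal R → ∃ s : R, r = π * s := by
    intro r hr
    obtain ⟨a, rfl⟩ := Ideal.Quotient.mk_surjective r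
    have hnu : ¬IsUnit (Ideal.Quotient.mk (Ideal.span {ϖ ^ m}) a) :=
      (IsLocalRing.mem_maximalIdeal _).mp hr
    have ha : ¬IsUnit a := fun h => hnu (h.map _)
    have : a ∈ IsLocalRing.maximalIdeal O := (IsLocalRing.mem_maximalIdeal _).mpr ha
    rw [hϖ.maximalIdeal_eq, Ideal.mem_span_singleton] at this
    obtain ⟨s, rfl⟩ := this
    exact ⟨Ideal.Quotient.mk _ s, by rw [map_mul, hπdef]⟩
  have hπmem : π ∈ IsLocalRing.maximalIdeal R := by
    rw [IsLocalRing.mem_maximalIdeal _, mem_nonunits_iff]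
    intro hu
    have := hu.pow m
    rw [hπm] at this
    exact not_isUnit_zero this
  constructor
  · -- freeness implies the divisibility criterion
    intro hF x hx
    haveI := hF
    let b := Module.Free.chooseBasis R M
    have hco : ∀ i, π * (b.repr x i) = 0 := by
      intro i
      have h1 : b.repr (π • x) = π • b.repr x := map_smul _ _ _
      rw [hx, map_zero] at h1
      have := congrArg (fun f => f i) h1
      simpa [Finsupp.smul_apply, smul_eq_mul] using this.symm
    have hmem : x ∈ LinearMap.range (LinearMap.lsmul R M (π ^ (m - 1))) := by
      rw [← b.linearCombination_repr x, Finsupp.linearCombination_apply, Finsupp.sum]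
      apply Submodule.sum_mem
      intro i _
      obtain ⟨c, hc⟩ := hann (b.repr x i) (hco i)
      exact ⟨c • b i, by rw [LinearMap.lsmul_apply, smul_smul, ← hc]⟩
    obtain ⟨y, hy⟩ := hmem
    exact ⟨y, hy.symm⟩
  · -- the divisibility criterion implies freeness
    intro h
    haveI := Module.finitePresentation_of_finite R M
    apply Module.free_of_maximalIdeal_rTensor_injective
    rw [← LinearMap.ker_eq_bot]
    apply LinearMap.ker_eq_bot'.mpr
    -- every element of `𝔪 ⊗ M` has the form `π ⊗ x`
    have key : ∀ t : (IsLocalRing.maximalIdeal R) ⊗[R] M,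
        ∃ x : M, t = (⟨π, hπmem⟩ : IsLocalRing.maximalIdeal R) ⊗ₜ[R] x := by
      intro t
      induction t using TensorProduct.induction_on with
      | zero => exact ⟨0, (TensorProduct.tmul_zero _ _).symm⟩
      | tmul i x =>
        obtain ⟨s, hs⟩ := hdvd i.1 i.2
        have hi : i = s • (⟨π, hπmem⟩ : IsLocalRing.maximalIdeal R) :=
          Subtype.ext (by simp [hs, smul_eq_mul, mul_comm])
        rw [hi, TensorProduct.smul_tmul]
        exact ⟨s • x, rfl⟩
      | add t1 t2 h1 h2 =>
        obtain ⟨x1, rfl⟩ := h1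
        obtain ⟨x2, rfl⟩ := h2
        exact ⟨x1 + x2, (TensorProduct.tmul_add _ _ _).symm⟩
    intro t ht
    obtain ⟨x, rfl⟩ := key t
    rw [LinearMap.rTensor_tmul] at ht
    have h0 : π • x = 0 := by
      have := congrArg (TensorProduct.lid R M) ht
      simp only [TensorProduct.lid_tmul, map_zero, Submodule.coe_subtype, Submodule.subtype_apply] at this
      exact this
    obtain ⟨y, hy⟩ := h x h0
    rw [hy, ← TensorProduct.smul_tmul]
    have hz : (π ^ (m - 1) • (⟨π, hπmem⟩ : IsLocalRing.maximalIdeal R)) = 0 := by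
      apply Subtype.ext
      show π ^ (m - 1) • π = (0 : R)
      rw [smul_eq_mul, ← pow_succ, hmm, hπm]
    rw [hz, TensorProduct.zero_tmul]
end

section
/- Let M be an O-module, d ≥ 1 and m ≥ 1 integers, and φ : (O/ϖ^m O)^d → M an O-linear map. Assume that for every a ∈ (O/ϖ^m O)^d with ϖ·φ(a) = 0 there exists b ∈ (O/ϖ^m O)^d such that φ(a) = ϖ^{m−1}·φ(b). Then the image of φ is a free O/ϖ^m O-module and the kernel of φ is a direct summand of the O/ϖ^m O-module (O/ϖ^m O)^d. -/
/-!
Module-theoretic content of Lemma 4.2 of the paper: if `φ : (O/ϖ^m O)^d → M` is an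
`O`-linear map such that every `φ(a)` killed by `ϖ` is of the form `ϖ^(m-1) • φ(b)`,
then the image of `φ` is a free `O/ϖ^m O`-module and the kernel of `φ` is a direct
summand of `(O/ϖ^m O)^d`.
-/

/-- The action of `O` on `O ⧸ I` agrees with multiplication by the residue class. -/
lemma stmt2_aux_smul_mk {O : Type*} [CommRing O] (I : Ideal O) (a : O) (v : O ⧸ I) :
    (Ideal.Quotient.mk I a) • v = a • v := by
  conv_rhs => rw [Algebra.smul_def a v, Ideal.Quotient.algebraMap_eq]
  rw [smul_eq_mul]

lemma stmt2_aux_le_of_pow_dvd {O : Type*} [CommRing O] [IsDomain O] {ϖ : O}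
    (hϖ : Irreducible ϖ) {a b : ℕ} (h : ϖ ^ a ∣ ϖ ^ b) : a ≤ b := by
  by_contra hlt
  push_neg at hlt
  obtain ⟨c, hc⟩ : ϖ ^ (b + 1) ∣ ϖ ^ b := dvd_trans (pow_dvd_pow ϖ hlt) h
  have h2 : ϖ ^ b * 1 = ϖ ^ b * (ϖ * c) := by
    conv_lhs => rw [mul_one, hc]
    rw [pow_succ]; ring
  have h3 := mul_left_cancel₀ (pow_ne_zero b hϖ.ne_zero) h2
  exact hϖ.not_isUnit (IsUnit.of_mul_eq_one (a := ϖ) c h3.symm)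

universe u v

open DirectSum

set_option maxHeartbeats 1000000 in
set_option synthInstance.maxHeartbeats 400000 in
theorem stmt2_aux {O : Type u} [CommRing O] [IsDomain O] [IsDiscreteValuationRing O]
    (ϖ : O) (hϖ : Irreducible ϖ) (d m : ℕ) (hm : 1 ≤ m)
    (M : Type v) [AddCommGroup M] [Module O M]
    (I : Ideal O) (hI : I = Ideal.span {ϖ ^ m})
    (φ : (Fin d → O ⧸ I) →ₗ[O] M)
    (h : ∀ a : Fin d → O ⧸ I,
      ϖ • φ a = 0 → ∃ b : Fin d → O ⧸ I, φ a = ϖ ^ (m - 1) • φ b) :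
    (∃ n : ℕ, Nonempty ((LinearMap.range φ) ≃ₗ[O] (Fin n → O ⧸ I))) ∧
    (∃ C : Submodule O (Fin d → O ⧸ I), IsCompl (LinearMap.ker φ) C) := by
  classical
  have hπm0 : ϖ ^ m ≠ 0 := pow_ne_zero _ hϖ.ne_zero
  have hmemI : ϖ ^ m ∈ I := hI ▸ Ideal.mem_span_singleton_self _
  -- every element of `O ⧸ I` is killed by `ϖ ^ m`
  have hkillq : ∀ x : O ⧸ I, (ϖ ^ m) • x = 0 := by
    intro x
    rw [Algebra.smul_def, Ideal.Quotient.algebraMap_eq,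
      Ideal.Quotient.eq_zero_iff_mem.mpr hmemI, zero_mul]
  -- properties of the range of φ
  have hNprop : ∀ x : LinearMap.range φ, ϖ • x = 0 →
      ∃ y : LinearMap.range φ, x = ϖ ^ (m - 1) • y := by
    rintro ⟨x, hx⟩ hx0
    rw [LinearMap.mem_range] at hx
    obtain ⟨a, rfl⟩ := hx
    have hφa : ϖ • φ a = 0 := by
      have := congrArg Subtype.val hx0
      simpa using this
    obtain ⟨b, hb⟩ := h a hφa
    exact ⟨⟨φ b, LinearMap.mem_range_self φ b⟩, Subtype.ext (by simpa using hb)⟩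
  have hNkill : ∀ x : LinearMap.range φ, (ϖ ^ m) • x = 0 := by
    rintro ⟨x, hx⟩
    rw [LinearMap.mem_range] at hx
    obtain ⟨a, rfl⟩ := hx
    apply Subtype.ext
    show (ϖ ^ m) • φ a = 0
    rw [← map_smul]
    have ha0 : (ϖ ^ m) • a = 0 := by
      funext i
      exact hkillq (a i)
    rw [ha0, map_zero]
  -- the range is a finitely generated torsion module
  have htors : Module.IsTorsion O (ULift.{u} (LinearMap.range φ)) := by
    intro x
    refine ⟨⟨ϖ ^ m, mem_nonZeroDivisors_of_ne_zero hπm0⟩, ?_⟩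
    exact ULift.ext _ _ (hNkill x.down)
  haveI : Module.Finite O (ULift.{u} (LinearMap.range φ)) :=
    Module.Finite.equiv (ULift.moduleEquiv (R := O) (M := LinearMap.range φ)).symm
  obtain ⟨ι, hfin, p, hp, e, ⟨f⟩⟩ :=
    Module.equiv_directSum_of_isTorsion (R := O) (M := ULift.{u} (LinearMap.range φ)) htors
  haveI := hfin
  set F := (ULift.moduleEquiv (R := O) (M := LinearMap.range φ)).symm.trans f with hFdef
  -- transfer the properties to the direct sum
  have hD1 : ∀ x : (⨁ i, O ⧸ (O ∙ p i ^ e i)), ϖ • x = 0 → ∃ y : (⨁ i, O ⧸ (O ∙ p i ^ e i)), x = ϖ ^ (m - 1) • y := by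
    intro x hx
    have h1 : ϖ • F.symm x = 0 := by rw [← map_smul, hx, map_zero]
    obtain ⟨y, hy⟩ := hNprop _ h1
    refine ⟨F y, ?_⟩
    have := congrArg F hy
    rwa [F.apply_symm_apply, map_smul] at this
  have hD2 : ∀ x : (⨁ i, O ⧸ (O ∙ p i ^ e i)), (ϖ ^ m) • x = 0 := by
    intro x
    have h1 : (ϖ ^ m) • F.symm x = 0 := hNkill _
    have := congrArg F h1
    rwa [map_smul, F.apply_symm_apply, map_zero] at this
  have hassoc : ∀ i, Associated ϖ (p i) := fun i =>
    IsDiscreteValuationRing.associated_of_irreducible O hϖ (hp i)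
  -- each exponent is at most m
  have hle : ∀ i, e i ≤ m := by
    intro i
    have h0 := hD2 (DirectSum.lof O ι (fun i => O ⧸ (O ∙ p i ^ e i)) i (Submodule.Quotient.mk 1))
    have h1 : ((ϖ ^ m) • DirectSum.lof O ι (fun i => O ⧸ (O ∙ p i ^ e i)) i (Submodule.Quotient.mk 1)) i = 0 := by
      rw [h0]; rfl
    rw [DirectSum.smul_apply, DirectSum.lof_apply, ← Submodule.Quotient.mk_smul,
      Submodule.Quotient.mk_eq_zero, smul_eq_mul, mul_one] at h1
    obtain ⟨c, hc⟩ : p i ^ e i ∣ ϖ ^ m := Ideal.mem_span_singleton.mp h1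
    have : ϖ ^ e i ∣ ϖ ^ m := ((hassoc i).pow_pow.dvd).trans ⟨c, hc⟩
    exact stmt2_aux_le_of_pow_dvd hϖ this
  -- each nonzero exponent equals m
  have heq : ∀ i, e i ≠ 0 → e i = m := by
    intro i hne
    by_contra hne2
    have h1 : 1 ≤ e i := Nat.one_le_iff_ne_zero.mpr hne
    have h2 : e i ≤ m - 1 := by have := hle i; omega
    have hes : e i = (e i - 1) + 1 := by omega
    set x := DirectSum.lof O ι (fun i => O ⧸ (O ∙ p i ^ e i)) i (Submodule.Quotient.mk (p i ^ (e i - 1))) with hxdef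
    have hx0 : ϖ • x = 0 := by
      rw [hxdef, ← map_smul, ← Submodule.Quotient.mk_smul]
      have hmem : ϖ • p i ^ (e i - 1) ∈ (O ∙ p i ^ e i) := by
        refine Ideal.mem_span_singleton.mpr ?_
        calc p i ^ e i = p i ^ (e i - 1) * p i := by
              conv_lhs => rw [hes, pow_succ]
        _ ∣ p i ^ (e i - 1) * ϖ := mul_dvd_mul_left _ (hassoc i).symm.dvd
        _ = ϖ • p i ^ (e i - 1) := by rw [smul_eq_mul, mul_comm]
      rw [(Submodule.Quotient.mk_eq_zero _).mpr hmem, map_zero]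
    obtain ⟨y, hy⟩ := hD1 x hx0
    obtain ⟨c, hc⟩ := Submodule.Quotient.mk_surjective _ (y i)
    have hcomp : (Submodule.Quotient.mk (p i ^ (e i - 1)) : O ⧸ (O ∙ p i ^ e i)) =
        Submodule.Quotient.mk (ϖ ^ (m - 1) • c) := by
      have h3 := congrArg (fun z : (⨁ i, O ⧸ (O ∙ p i ^ e i)) => z i) hy
      simp only [hxdef, DirectSum.smul_apply, DirectSum.lof_apply] at h3
      rw [h3, ← hc, Submodule.Quotient.mk_smul]
    have hdvd : p i ^ e i ∣ p i ^ (e i - 1) - ϖ ^ (m - 1) * c := by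
      have h4 := (Submodule.Quotient.eq _).mp hcomp
      rw [smul_eq_mul] at h4
      exact Ideal.mem_span_singleton.mp h4
    have hdvd2 : p i ^ e i ∣ ϖ ^ (m - 1) * c :=
      Dvd.dvd.mul_right (((hassoc i).pow_pow.symm.dvd).trans (pow_dvd_pow ϖ h2)) c
    obtain ⟨t, ht⟩ : p i ^ e i ∣ p i ^ (e i - 1) := by
      have h5 := dvd_add hdvd hdvd2
      rwa [sub_add_cancel] at h5
    rw [show p i ^ e i = p i ^ (e i - 1) * p i from by conv_lhs => rw [hes, pow_succ]] at ht
    have h3 : p i ^ (e i - 1) * 1 = p i ^ (e i - 1) * (p i * t) := by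
      conv_lhs => rw [mul_one, ht]
      ring
    have h4 := mul_left_cancel₀ (pow_ne_zero _ (hp i).ne_zero) h3
    exact (hp i).not_isUnit (IsUnit.of_mul_eq_one _ h4.symm)
  -- the nonzero indices
  set S := {i : ι // e i ≠ 0} with hSdef
  set n := Fintype.card S with hndef
  have hsub : ∀ i, e i = 0 → Subsingleton (O ⧸ (O ∙ p i ^ e i)) := by
    intro i h0
    refine Submodule.Quotient.subsingleton_iff.mpr ?_
    rw [h0, pow_zero]
    exact Ideal.span_singleton_one
  have hQeq : ∀ s : S, (O ∙ p (s : ι) ^ e (s : ι)) = (I : Submodule O O) := by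
    intro s
    rw [heq (s : ι) s.2, hI]
    exact Ideal.span_singleton_eq_span_singleton.mpr (hassoc (s : ι)).symm.pow_pow
  set ε := fun s : S =>
    Submodule.quotEquivOfEq _ _ (hQeq s) with hεdef
  -- the equivalence dropping the zero factors
  set toE := LinearMap.pi (fun s : S => (ε s).toLinearMap ∘ₗ
    LinearMap.proj (φ := fun i => O ⧸ (O ∙ p i ^ e i)) (s : ι)) with htoEdef
  set invE := LinearMap.pi (fun i : ι =>
      (if hne : e i ≠ 0 then
      ((ε ⟨i, hne⟩).symm.toLinearMap ∘ₗ
        LinearMap.proj (φ := fun _ : S => O ⧸ I) (⟨i, hne⟩ : S)) else 0 :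
        (S → O ⧸ I) →ₗ[O] O ⧸ (O ∙ p i ^ e i))) with hinvEdef
  have hE1 : toE ∘ₗ invE = LinearMap.id := by
    apply LinearMap.ext
    intro x
    funext s
    simp only [htoEdef, hinvEdef, LinearMap.comp_apply, LinearMap.id_apply,
      LinearMap.pi_apply, LinearMap.proj_apply]
    rw [dif_pos (by exact s.2)]
    simp
    exact (ε s).apply_symm_apply (x s)
  have hE2 : invE ∘ₗ toE = LinearMap.id := by
    apply LinearMap.ext
    intro x
    funext i
    by_cases hi : e i ≠ 0
    · simp only [htoEdef, hinvEdef, LinearMap.comp_apply, LinearMap.id_apply,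
        LinearMap.pi_apply, LinearMap.proj_apply]
      rw [dif_pos hi]
      simp
    · haveI := hsub i (not_not.mp hi)
      exact Subsingleton.elim _ _
  obtain ⟨E⟩ : Nonempty ((∀ i, O ⧸ (O ∙ p i ^ e i)) ≃ₗ[O] (S → O ⧸ I)) :=
    ⟨LinearEquiv.ofLinear toE invE hE1 hE2⟩
  obtain ⟨P⟩ : Nonempty ((S → O ⧸ I) ≃ₗ[O] (Fin n → O ⧸ I)) :=
    ⟨LinearEquiv.piCongrLeft' O (fun _ => O ⧸ I) (Fintype.equivFin S)⟩
  obtain ⟨W⟩ : Nonempty ((⨁ i, O ⧸ (O ∙ p i ^ e i)) ≃ₗ[O] (∀ i, O ⧸ (O ∙ p i ^ e i))) :=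
    ⟨DirectSum.linearEquivFunOnFintype O ι (fun i => O ⧸ (O ∙ p i ^ e i))⟩
  obtain ⟨G⟩ : Nonempty ((LinearMap.range φ) ≃ₗ[O] (Fin n → O ⧸ I)) :=
    ⟨F.trans (W.trans (E.trans P))⟩
  constructor
  · exact ⟨n, ⟨G⟩⟩
  -- second part : the kernel is a direct summand
  · set φ' := φ.rangeRestrict with hφ'def
    have hφ'surj : Function.Surjective φ' := φ.surjective_rangeRestrict
    choose c hc using fun j : Fin n => hφ'surj (G.symm (Pi.single j 1 : Fin n → O ⧸ I))
    set t : (Fin n → O ⧸ I) →ₗ[O] (Fin d → O ⧸ I) :=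
      { toFun := fun x => ∑ j, x j • c j
        map_add' := by
          intro x y
          simp [add_smul, Finset.sum_add_distrib]
        map_smul' := by
          intro a x
          simp [Finset.smul_sum, smul_assoc] } with htdef
    set s : (LinearMap.range φ) →ₗ[O] (Fin d → O ⧸ I) :=
      t ∘ₗ (G : (LinearMap.range φ) →ₗ[O] (Fin n → O ⧸ I)) with hsdef
    have key : ∀ y : LinearMap.range φ, φ' (s y) = y := by
      intro y
      choose a ha using fun j : Fin n => Ideal.Quotient.mk_surjective ((G y) j)
      have hs : s y = ∑ j, (G y) j • c j := rfl
      have step1 : φ' (s y) = ∑ j, a j • φ' (c j) := by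
        rw [hs, map_sum]
        refine Finset.sum_congr rfl fun j _ => ?_
        rw [← ha j]
        have hsm : (Ideal.Quotient.mk I (a j)) • c j = a j • c j :=
          funext fun k => stmt2_aux_smul_mk I (a j) (c j k)
        rw [hsm, map_smul]
      have step2 : (∑ j, a j • (Pi.single j 1 : Fin n → O ⧸ I)) = G y := by
        have hone : ∀ j : Fin n, a j • (Pi.single j 1 : Fin n → O ⧸ I) = (Pi.single j ((G y) j) : Fin n → O ⧸ I) := by
          intro j
          rw [← Pi.single_smul]
          congr 1
          rw [← ha j, ← stmt2_aux_smul_mk I (a j) 1, smul_eq_mul, mul_one]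
        rw [Finset.sum_congr rfl fun j _ => hone j, Finset.univ_sum_single]
      calc φ' (s y) = ∑ j, a j • φ' (c j) := step1
        _ = ∑ j, a j • G.symm (Pi.single j 1 : Fin n → O ⧸ I) := by simp [hc]
        _ = G.symm (∑ j, a j • (Pi.single j 1 : Fin n → O ⧸ I)) := by rw [map_sum]; simp [map_smul]
        _ = y := by rw [step2, G.symm_apply_apply]
    refine ⟨LinearMap.range s, ?_⟩
    have hker : LinearMap.ker φ = LinearMap.ker φ' := (LinearMap.ker_rangeRestrict φ).symm
    rw [hker]
    constructor
    · rw [disjoint_iff]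
      apply (Submodule.eq_bot_iff _).mpr
      intro x hx
      rw [Submodule.mem_inf] at hx
      obtain ⟨hk, y, rfl⟩ := hx
      have hy0 : y = 0 := by
        rw [← key y]
        exact hk
      rw [hy0, map_zero]
    · rw [codisjoint_iff]
      apply Submodule.eq_top_iff'.mpr
      intro x
      refine Submodule.mem_sup.mpr
        ⟨x - s (φ' x), ?_, s (φ' x), ⟨φ' x, rfl⟩, sub_add_cancel x _⟩
      rw [LinearMap.mem_ker, map_sub, key (φ' x), sub_self]

theorem stmt2 {O : Type*} [CommRing O] [IsDomain O] [IsDiscreteValuationRing O]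
    (ϖ : O) (hϖ : Irreducible ϖ) (d m : ℕ) (hd : 1 ≤ d) (hm : 1 ≤ m)
    (M : Type*) [AddCommGroup M] [Module O M]
    (φ : (Fin d → O ⧸ Ideal.span {ϖ ^ m}) →ₗ[O] M)
    (h : ∀ a : Fin d → O ⧸ Ideal.span {ϖ ^ m},
      ϖ • φ a = 0 → ∃ b : Fin d → O ⧸ Ideal.span {ϖ ^ m}, φ a = ϖ ^ (m - 1) • φ b) :
    -- the image of `φ` is a free `O/ϖ^m O`-module
    (∃ n : ℕ, Nonempty ((LinearMap.range φ) ≃ₗ[O] (Fin n → O ⧸ Ideal.span {ϖ ^ m}))) ∧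
    -- the kernel of `φ` is a direct summand of the `O/ϖ^m O`-module `(O/ϖ^m O)^d`
    (∃ C : Submodule O (Fin d → O ⧸ Ideal.span {ϖ ^ m}), IsCompl (LinearMap.ker φ) C) :=
  stmt2_aux ϖ hϖ d m hm M (Ideal.span {ϖ ^ m}) rfl φ h
end

section
/- Let g ∈ GL_d(O) be such that the automorphism of (O/ϖ^m O)^d induced by g (reducing entries modulo ϖ^m) maps J^0_{m,h} onto itself. Then g = k·p for some k ∈ K_m and p ∈ P_h(O). Consequently, the stabilizer of J^0_{m,h} in GL_d(O) equals K_m·P_h(O). -/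
open Matrix

section Aux

variable {R : Type*} [CommRing R]

/-- The submodule of vectors supported on the first `h` coordinates. -/
def myT (R : Type*) [CommRing R] (d h : ℕ) : Submodule R (Fin d → R) where
  carrier := {v | ∀ i : Fin d, h ≤ (i : ℕ) → v i = 0}
  add_mem' := fun {a b} ha hb i hi => by simp [ha i hi, hb i hi]
  zero_mem' := fun i _ => rfl
  smul_mem' := fun c v hv i hi => by simp [hv i hi]

lemma mem_myT {d h : ℕ} {v : Fin d → R} :
    v ∈ myT R d h ↔ ∀ i : Fin d, h ≤ (i : ℕ) → v i = 0 := Iff.rfl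

lemma span_single_eq_myT {d h : ℕ} (hh : h ≤ d) :
    Submodule.span R (Set.range fun i : Fin h => Pi.single (Fin.castLE hh i) (1 : R)) =
      myT R d h := by
  apply le_antisymm
  · rw [Submodule.span_le]
    rintro _ ⟨i, rfl⟩
    intro j hj
    refine Pi.single_eq_of_ne (fun hc => ?_) 1
    have hjh : (j : ℕ) < h := by rw [hc]; simpa using i.isLt
    omega
  · intro v hv
    have hv' : v = ∑ j : Fin d, Pi.single j (v j) := (Finset.univ_sum_single v).symm
    rw [hv']
    refine Submodule.sum_mem _ fun j _ => ?_
    by_cases hj : (j : ℕ) < h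
    · have h1 : Pi.single j (v j) = v j • (Pi.single j 1 : Fin d → R) := by
        ext r
        by_cases hr : r = j <;> simp [Pi.single_apply, hr]
      rw [h1]
      exact Submodule.smul_mem _ _ (Submodule.subset_span
        ⟨⟨(j : ℕ), hj⟩, congrArg (fun t => (Pi.single t 1 : Fin d → R)) (Fin.ext rfl)⟩)
    · rw [hv j (le_of_not_gt hj)]
      simp

lemma sum_castLE {d h : ℕ} (hh : h ≤ d) (f : Fin d → R)
    (hf : ∀ j : Fin d, h ≤ (j : ℕ) → f j = 0) :
    ∑ j : Fin d, f j = ∑ j : Fin h, f (Fin.castLE hh j) := by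
  classical
  set s : Finset (Fin d) := Finset.univ.map (Fin.castLEEmb hh) with hs
  rw [← Finset.sum_add_sum_compl s f]
  have h2 : ∑ j ∈ sᶜ, f j = 0 := by
    refine Finset.sum_eq_zero fun j hj => ?_
    refine hf j ?_
    by_contra hlt
    push_neg at hlt
    have : j ∈ s := by
      rw [hs, Finset.mem_map]
      exact ⟨⟨(j : ℕ), hlt⟩, Finset.mem_univ _, Fin.ext rfl⟩
    exact absurd this (Finset.mem_compl.mp hj)
  have h3 : ∑ j ∈ s, f j = ∑ j : Fin h, f (Fin.castLE hh j) := by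
    rw [hs, Finset.sum_map]
    rfl
  rw [h2, add_zero, h3]

lemma key_map {d h : ℕ} (hh : h ≤ d) (M N : Matrix (Fin d) (Fin d) R)
    (hMN : M * N = 1) (hNM : N * M = 1)
    (hM : ∀ i j : Fin d, h ≤ (i : ℕ) → (j : ℕ) < h → M i j = 0) :
    Submodule.map M.mulVecLin (myT R d h) = myT R d h := by
  classical
  set A : Matrix (Fin h) (Fin h) R :=
    Matrix.of fun i j => M (Fin.castLE hh i) (Fin.castLE hh j) with hA
  set B : Matrix (Fin h) (Fin h) R :=
    Matrix.of fun i j => N (Fin.castLE hh i) (Fin.castLE hh j) with hB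
  have hBA : B * A = 1 := by
    ext i k
    have hz : ∀ j : Fin d, h ≤ (j : ℕ) →
        N (Fin.castLE hh i) j * M j (Fin.castLE hh k) = 0 := fun j hj => by
      rw [hM j (Fin.castLE hh k) hj (by simp), mul_zero]
    have h1 := sum_castLE hh (fun j => N (Fin.castLE hh i) j * M j (Fin.castLE hh k)) hz
    calc (B * A) i k = ∑ j : Fin d, N (Fin.castLE hh i) j * M j (Fin.castLE hh k) := by
          rw [Matrix.mul_apply]; simpa [hA, hB] using h1.symm
      _ = (N * M) (Fin.castLE hh i) (Fin.castLE hh k) := (Matrix.mul_apply).symm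
      _ = (1 : Matrix (Fin d) (Fin d) R) (Fin.castLE hh i) (Fin.castLE hh k) := by rw [hNM]
      _ = (1 : Matrix (Fin h) (Fin h) R) i k := by
          simp [Matrix.one_apply, Fin.castLE_inj]
  have hAB : A * B = 1 := mul_eq_one_comm.mp hBA
  apply le_antisymm
  · rintro x ⟨v, hv, rfl⟩
    rw [mem_myT]
    intro i hi
    rw [Matrix.mulVecLin_apply]
    show ∑ j : Fin d, M i j * v j = 0
    refine Finset.sum_eq_zero fun j _ => ?_
    by_cases hj : (j : ℕ) < h
    · rw [hM i j hi hj, zero_mul]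
    · rw [hv j (le_of_not_gt hj), mul_zero]
  · conv_lhs => rw [← span_single_eq_myT hh]
    rw [Submodule.span_le]
    rintro _ ⟨i, rfl⟩
    refine ⟨fun r => if hr : (r : ℕ) < h then B ⟨(r : ℕ), hr⟩ i else 0,
      fun r hr => dif_neg (by omega), ?_⟩
    rw [Matrix.mulVecLin_apply]
    funext r
    have hz : ∀ j : Fin d, h ≤ (j : ℕ) →
        M r j * (if hj : (j : ℕ) < h then B ⟨(j : ℕ), hj⟩ i else 0) = 0 := fun j hj => by
      rw [dif_neg (by omega), mul_zero]
    have h1 := sum_castLE hh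
      (fun j => M r j * (if hj : (j : ℕ) < h then B ⟨(j : ℕ), hj⟩ i else 0)) hz
    have h2 : ∀ j : Fin h,
        (if hj : ((Fin.castLE hh j : Fin d) : ℕ) < h
          then B ⟨((Fin.castLE hh j : Fin d) : ℕ), hj⟩ i else 0) = B j i := fun j => by
      rw [dif_pos (by simpa using j.isLt)]
      exact congrFun (congrArg B (Fin.ext (by simp))) i
    show (M *ᵥ fun j : Fin d => if hj : (j : ℕ) < h then B ⟨(j : ℕ), hj⟩ i else 0) r
      = Pi.single (M := fun _ : Fin d => R) (Fin.castLE hh i) 1 r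
    rw [show (M *ᵥ fun j : Fin d => if hj : (j : ℕ) < h then B ⟨(j : ℕ), hj⟩ i else 0) r
      = ∑ j : Fin d, M r j * (if hj : (j : ℕ) < h then B ⟨(j : ℕ), hj⟩ i else 0) from rfl, h1]
    simp_rw [h2]
    by_cases hr : (r : ℕ) < h
    · have hsum : ∑ j : Fin h, M r (Fin.castLE hh j) * B j i = (A * B) ⟨(r : ℕ), hr⟩ i := by
        rw [Matrix.mul_apply]
        exact Finset.sum_congr rfl fun j _ => rfl
      rw [hsum, hAB]
      rw [Matrix.one_apply, Pi.single_apply]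
      by_cases hri : (⟨(r : ℕ), hr⟩ : Fin h) = i
      · rw [if_pos hri, if_pos (by rw [← hri]; exact Fin.ext rfl)]
      · rw [if_neg hri,
          if_neg (fun hc => hri (Fin.ext (by simpa using congrArg Fin.val hc)))]
    · have h3 : ∀ j : Fin h, M r (Fin.castLE hh j) * B j i = 0 := fun j => by
        rw [hM r (Fin.castLE hh j) (le_of_not_gt hr) (by simpa using j.isLt), zero_mul]
      rw [Finset.sum_congr rfl fun j _ => h3 j, Finset.sum_const_zero]
      have hne : r ≠ Fin.castLE hh i := fun hc => hr (by rw [hc]; simpa using i.isLt)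
      exact (Pi.single_eq_of_ne (M := fun _ : Fin d => R) hne 1).symm

end Aux

theorem stmt4 {O : Type*} [CommRing O] [IsDomain O] [IsDiscreteValuationRing O]
    (ϖ : O) (hϖ : Irreducible ϖ) (d m h : ℕ) (hd : 1 ≤ d) (hm : 1 ≤ m) (hh : h ≤ d)
    (g : GL (Fin d) O) :
    Submodule.map
        (Matrix.mulVecLin
          ((g : Matrix (Fin d) (Fin d) O).map (Ideal.Quotient.mk (Ideal.span {ϖ ^ m}))))
        (Submodule.span (O ⧸ Ideal.span {ϖ ^ m})
          (Set.range fun i : Fin h => Pi.single (Fin.castLE hh i) 1)) =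
      Submodule.span (O ⧸ Ideal.span {ϖ ^ m})
        (Set.range fun i : Fin h => Pi.single (Fin.castLE hh i) 1) ↔
    ∃ k p : GL (Fin d) O,
      -- `k ∈ K_m`, the kernel of the reduction map `GL_d(O) → GL_d(O/ϖ^m O)`
      k ∈ (Matrix.GeneralLinearGroup.map (Ideal.Quotient.mk (Ideal.span {ϖ ^ m}))).ker ∧
      -- `p ∈ P_h(O)`: the lower-left `(d-h) × h` block of `p` vanishes
      (∀ i j : Fin d, h ≤ (i : ℕ) → (j : ℕ) < h → (p : Matrix (Fin d) (Fin d) O) i j = 0) ∧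
      g = k * p := by
  classical
  set I : Ideal O := Ideal.span {ϖ ^ m} with hI
  set φ : O →+* O ⧸ I := Ideal.Quotient.mk I with hφ
  have hImax : I ≤ IsLocalRing.maximalIdeal O := by
    rw [hI, Ideal.span_le]
    rintro _ rfl
    rw [SetLike.mem_coe, IsLocalRing.mem_maximalIdeal, mem_nonunits_iff]
    intro hu
    exact hϖ.not_isUnit ((isUnit_pow_iff (by omega)).mp hu)
  rw [span_single_eq_myT hh]
  constructor
  · intro hyp
    -- lower-left block of g is divisible by ϖ^m
    have hblock : ∀ i j : Fin d, h ≤ (i : ℕ) → (j : ℕ) < h →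
        (g : Matrix (Fin d) (Fin d) O) i j ∈ I := by
      intro i j hi hj
      have hmem : ((g : Matrix (Fin d) (Fin d) O).map φ).mulVecLin
          (Pi.single (Fin.castLE hh ⟨(j : ℕ), hj⟩) 1) ∈ myT (O ⧸ I) d h := by
        rw [← hyp]
        refine Submodule.mem_map_of_mem (fun r hr => ?_)
        refine Pi.single_eq_of_ne (fun hc => ?_) 1
        have hrh : (r : ℕ) < h := by rw [hc]; simpa using hj
        omega
      have h2 := hmem i hi
      rw [Matrix.mulVecLin_apply, Matrix.mulVec_single_one, Matrix.col_apply] at h2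
      simp only [Matrix.map_apply, mul_one] at h2
      have hj' : Fin.castLE hh ⟨(j : ℕ), hj⟩ = j := Fin.ext rfl
      rw [hj'] at h2
      exact Ideal.Quotient.eq_zero_iff_mem.mp h2
    set pmat : Matrix (Fin d) (Fin d) O :=
      Matrix.of fun i j => if h ≤ (i : ℕ) ∧ (j : ℕ) < h then 0
        else (g : Matrix (Fin d) (Fin d) O) i j with hpmat
    have hpg : pmat.map φ = (g : Matrix (Fin d) (Fin d) O).map φ := by
      ext i j
      rw [Matrix.map_apply, Matrix.map_apply, hpmat]
      by_cases hc : h ≤ (i : ℕ) ∧ (j : ℕ) < h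
      · show φ (if _ then _ else _) = _
        rw [if_pos hc, map_zero]
        exact (Ideal.Quotient.eq_zero_iff_mem.mpr (hblock i j hc.1 hc.2)).symm
      · show φ (if _ then _ else _) = _
        rw [if_neg hc]
    have hgdet : IsUnit (g : Matrix (Fin d) (Fin d) O).det := by
      refine IsUnit.of_mul_eq_one ((g⁻¹ : GL (Fin d) O) : Matrix (Fin d) (Fin d) O).det ?_
      rw [← Matrix.det_mul]
      have : (g : Matrix (Fin d) (Fin d) O) * ((g⁻¹ : GL (Fin d) O) : Matrix (Fin d) (Fin d) O)
          = 1 := g.mul_inv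
      rw [this, Matrix.det_one]
    have hpdet : IsUnit pmat.det := by
      by_contra hnu
      have h1 : φ pmat.det = φ (g : Matrix (Fin d) (Fin d) O).det := by
        rw [RingHom.map_det, RingHom.map_det]
        simp only [RingHom.mapMatrix_apply]
        rw [hpg]
      have h2 : (g : Matrix (Fin d) (Fin d) O).det - pmat.det ∈ I := by
        rw [← Ideal.Quotient.eq_zero_iff_mem, map_sub, h1, sub_self]
      have h3 : pmat.det ∈ IsLocalRing.maximalIdeal O := by
        rw [IsLocalRing.mem_maximalIdeal, mem_nonunits_iff]; exact hnu
      have h4 : (g : Matrix (Fin d) (Fin d) O).det ∈ IsLocalRing.maximalIdeal O := by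
        have := add_mem (hImax h2) h3
        simpa using this
      rw [IsLocalRing.mem_maximalIdeal, mem_nonunits_iff] at h4
      exact h4 hgdet
    have hpu : IsUnit pmat := (Matrix.isUnit_iff_isUnit_det pmat).mpr hpdet
    set p : GL (Fin d) O := hpu.unit with hp
    have hpval : (p : Matrix (Fin d) (Fin d) O) = pmat := hpu.unit_spec
    refine ⟨g * p⁻¹, p, ?_, ?_, (inv_mul_cancel_right g p).symm⟩
    · rw [MonoidHom.mem_ker]
      have hmapeq : Matrix.GeneralLinearGroup.map φ g = Matrix.GeneralLinearGroup.map φ p := by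
        apply Units.ext
        show (g : Matrix (Fin d) (Fin d) O).map φ = (p : Matrix (Fin d) (Fin d) O).map φ
        rw [hpval, hpg]
      rw [_root_.map_mul, _root_.map_inv, hmapeq, mul_inv_cancel]
    · intro i j hi hj
      rw [hpval, hpmat]
      exact if_pos ⟨hi, hj⟩
  · rintro ⟨k, p, hk, hp, rfl⟩
    have hkval : (k : Matrix (Fin d) (Fin d) O).map φ = 1 := by
      rw [MonoidHom.mem_ker] at hk
      have := congrArg Units.val hk
      exact this
    have hmat : ((k * p : GL (Fin d) O) : Matrix (Fin d) (Fin d) O).map φ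
        = (p : Matrix (Fin d) (Fin d) O).map φ := by
      rw [Units.val_mul, Matrix.map_mul, hkval, one_mul]
    rw [hmat]
    refine key_map hh _ (((p⁻¹ : GL (Fin d) O) : Matrix (Fin d) (Fin d) O).map φ) ?_ ?_ ?_
    · rw [← Matrix.map_mul]
      have : (p : Matrix (Fin d) (Fin d) O) * ((p⁻¹ : GL (Fin d) O) : Matrix (Fin d) (Fin d) O)
          = 1 := p.mul_inv
      rw [this, Matrix.map_one φ (map_zero φ) (map_one φ)]
    · rw [← Matrix.map_mul]
      have : ((p⁻¹ : GL (Fin d) O) : Matrix (Fin d) (Fin d) O) * (p : Matrix (Fin d) (Fin d) O)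
          = 1 := p.inv_mul
      rw [this, Matrix.map_one φ (map_zero φ) (map_one φ)]
    · intro i j hi hj
      rw [Matrix.map_apply, hp i j hi hj, map_zero]
end

section
/- The map GL_d(O) → S_{m,h}, g ↦ g·J^0_{m,h} (where g acts on (O/ϖ^m O)^d via reduction of entries modulo ϖ^m), induces a bijection from the double coset space K_m\GL_d(O)/P_h(O) onto S_{m,h}. -/
section Aux

variable {α : Type*} [CommRing α] {d h : ℕ}

lemma mem_J0_iff (hh : h ≤ d) (v : Fin d → α) :
    v ∈ Submodule.span α
        (Set.range fun i : Fin h => Pi.single (M := fun _ : Fin d => α) (Fin.castLE hh i) 1) ↔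
      ∀ i : Fin d, h ≤ (i : ℕ) → v i = 0 := by
  constructor
  · intro hv
    induction hv using Submodule.span_induction with
    | mem x hx =>
      obtain ⟨i, rfl⟩ := hx
      intro j hj
      refine Pi.single_eq_of_ne ?_ 1
      have h1 : ((Fin.castLE hh i : Fin d) : ℕ) = (i : ℕ) := rfl
      have h2 := i.isLt
      exact Fin.ne_of_val_ne (by omega)
    | zero => intro j hj; rfl
    | add x y _ _ hx hy => intro j hj; simp [hx j hj, hy j hj]
    | smul c x _ hx => intro j hj; simp [hx j hj]
  · intro hv
    have hv' : v = ∑ j : Fin d, Pi.single j (v j) := (Finset.univ_sum_single v).symm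
    rw [hv']
    apply Submodule.sum_mem
    intro j _
    by_cases hj : (j : ℕ) < h
    · have hs : Pi.single (M := fun _ : Fin d => α) j (v j) = v j • Pi.single (M := fun _ : Fin d => α) j (1 : α) := by
        rw [← Pi.single_smul, smul_eq_mul, mul_one]
      rw [hs]
      refine Submodule.smul_mem _ _ (Submodule.subset_span ⟨⟨(j : ℕ), hj⟩, ?_⟩)
      congr 1
    · rw [hv j (le_of_not_gt hj)]
      simp

lemma map_J0_le (hh : h ≤ d) (M : Matrix (Fin d) (Fin d) α)
    (hM : ∀ i j : Fin d, h ≤ (i : ℕ) → (j : ℕ) < h → M i j = 0) :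
    (Submodule.span α (Set.range fun i : Fin h =>
        Pi.single (M := fun _ : Fin d => α) (Fin.castLE hh i) 1)).map M.mulVecLin ≤
      Submodule.span α (Set.range fun i : Fin h =>
        Pi.single (M := fun _ : Fin d => α) (Fin.castLE hh i) 1) := by
  rw [Submodule.map_span]
  refine Submodule.span_le.mpr ?_
  rintro x ⟨y, ⟨i, rfl⟩, rfl⟩
  rw [SetLike.mem_coe, mem_J0_iff hh]
  intro j hj
  show M.mulVec (Pi.single _ 1) j = 0
  rw [Matrix.mulVec_single]
  simp [hM j (Fin.castLE hh i) hj i.isLt]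

lemma ll0_inv (hh : h ≤ d) {M : Matrix (Fin d) (Fin d) α} (hu : IsUnit M)
    (hM : ∀ i j : Fin d, h ≤ (i : ℕ) → (j : ℕ) < h → M i j = 0) :
    ∀ i j : Fin d, h ≤ (i : ℕ) → (j : ℕ) < h → M⁻¹ i j = 0 := by
  intro i j hi hj
  set e : Fin h ⊕ Fin (d - h) ≃ Fin d :=
    finSumFinEquiv.trans (finCongr (Nat.add_sub_cancel' hh)) with he
  have hval1 : ∀ a : Fin h, ((e (Sum.inl a)) : ℕ) = (a : ℕ) := by
    intro a; simp [he]
  have hval2 : ∀ b : Fin (d - h), ((e (Sum.inr b)) : ℕ) = h + (b : ℕ) := by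
    intro b; simp [he]
  set N := M.submatrix e e with hN
  have h21 : N.toBlocks₂₁ = 0 := by
    ext b a
    show M (e (Sum.inr b)) (e (Sum.inl a)) = 0
    exact hM _ _ (by rw [hval2]; omega) (by rw [hval1]; exact a.isLt)
  have hblock : N = Matrix.fromBlocks N.toBlocks₁₁ N.toBlocks₁₂ 0 N.toBlocks₂₂ := by
    rw [← h21]
    exact (Matrix.fromBlocks_toBlocks N).symm
  have hNu : IsUnit N := by
    rw [Matrix.isUnit_iff_isUnit_det, hN, Matrix.det_submatrix_equiv_self]
    exact (Matrix.isUnit_iff_isUnit_det M).mp hu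
  have hAD : IsUnit N.toBlocks₁₁ ∧ IsUnit N.toBlocks₂₂ := by
    rw [hblock] at hNu
    exact Matrix.isUnit_fromBlocks_zero₂₁.mp hNu
  have hNinv : N⁻¹ = Matrix.fromBlocks N.toBlocks₁₁⁻¹
      (-(N.toBlocks₁₁⁻¹ * N.toBlocks₁₂ * N.toBlocks₂₂⁻¹)) 0 N.toBlocks₂₂⁻¹ := by
    conv_lhs => rw [hblock]
    exact Matrix.inv_fromBlocks_zero₂₁_of_isUnit_iff _ _ _ (by simp [hAD.1, hAD.2])
  obtain ⟨b, hb⟩ : ∃ b, e.symm i = Sum.inr b := by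
    rcases hsum : e.symm i with a | b
    · exfalso
      have : (i : ℕ) = (a : ℕ) := by
        rw [← hval1 a, ← hsum, e.apply_symm_apply]
      have := a.isLt
      omega
    · exact ⟨b, rfl⟩
  obtain ⟨a, ha⟩ : ∃ a, e.symm j = Sum.inl a := by
    rcases hsum : e.symm j with a | b
    · exact ⟨a, rfl⟩
    · exfalso
      have : (j : ℕ) = h + (b : ℕ) := by
        rw [← hval2 b, ← hsum, e.apply_symm_apply]
      omega
  have hNi : N⁻¹ = M⁻¹.submatrix e e := by
    rw [hN, Matrix.inv_submatrix_equiv]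
  have : M⁻¹ i j = N⁻¹ (e.symm i) (e.symm j) := by
    rw [hNi, Matrix.submatrix_apply, e.apply_symm_apply, e.apply_symm_apply]
  rw [this, hb, ha, hNinv]
  rfl


lemma map_J0_eq (hh : h ≤ d) {M : Matrix (Fin d) (Fin d) α} (hu : IsUnit M)
    (hM : ∀ i j : Fin d, h ≤ (i : ℕ) → (j : ℕ) < h → M i j = 0) :
    (Submodule.span α (Set.range fun i : Fin h =>
        Pi.single (M := fun _ : Fin d => α) (Fin.castLE hh i) 1)).map M.mulVecLin =
      Submodule.span α (Set.range fun i : Fin h =>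
        Pi.single (M := fun _ : Fin d => α) (Fin.castLE hh i) 1) := by
  refine le_antisymm (map_J0_le hh M hM) ?_
  intro v hv
  have h1 : M * M⁻¹ = 1 := Matrix.mul_nonsing_inv M ((Matrix.isUnit_iff_isUnit_det M).mp hu)
  have hv' : M⁻¹.mulVecLin v ∈ Submodule.span α (Set.range fun i : Fin h =>
      Pi.single (M := fun _ : Fin d => α) (Fin.castLE hh i) 1) :=
    map_J0_le hh M⁻¹ (ll0_inv hh hu hM) (Submodule.mem_map_of_mem hv)
  have hveq : M.mulVecLin (M⁻¹.mulVecLin v) = v := by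
    rw [← LinearMap.comp_apply, ← Matrix.mulVecLin_mul, h1, Matrix.mulVecLin_one,
      LinearMap.id_apply]
  exact hveq ▸ Submodule.mem_map_of_mem hv'

lemma ll0_of_map_le (hh : h ≤ d) (M : Matrix (Fin d) (Fin d) α)
    (hle : (Submodule.span α (Set.range fun i : Fin h =>
        Pi.single (M := fun _ : Fin d => α) (Fin.castLE hh i) 1)).map M.mulVecLin ≤
      Submodule.span α (Set.range fun i : Fin h =>
        Pi.single (M := fun _ : Fin d => α) (Fin.castLE hh i) 1)) :
    ∀ i j : Fin d, h ≤ (i : ℕ) → (j : ℕ) < h → M i j = 0 := by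
  intro i j hi hj
  have hgen : Pi.single (M := fun _ : Fin d => α) j (1 : α) ∈
      Submodule.span α (Set.range fun i : Fin h =>
        Pi.single (M := fun _ : Fin d => α) (Fin.castLE hh i) 1) :=
    (mem_J0_iff hh _).mpr fun i' hi' => Pi.single_eq_of_ne (Fin.ne_of_val_ne (by omega)) 1
  have h2 := (mem_J0_iff hh _).mp (hle (Submodule.mem_map_of_mem hgen)) i hi
  change M.mulVec (Pi.single j 1) i = 0 at h2
  rw [Matrix.mulVec_single] at h2
  simpa using h2


lemma mulVecLin_comp_cancel {U V : Matrix (Fin d) (Fin d) α} (hUV : U * V = 1) :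
    U.mulVecLin.comp V.mulVecLin = LinearMap.id := by
  rw [← Matrix.mulVecLin_mul, hUV, Matrix.mulVecLin_one]

lemma mulVecLin_injective {U : Matrix (Fin d) (Fin d) α} (hu : IsUnit U) :
    Function.Injective U.mulVecLin := by
  have h1 : U⁻¹ * U = 1 := Matrix.nonsing_inv_mul U ((Matrix.isUnit_iff_isUnit_det U).mp hu)
  intro x y hxy
  have h2 : (U⁻¹.mulVecLin.comp U.mulVecLin) x = (U⁻¹.mulVecLin.comp U.mulVecLin) y := by
    simp only [LinearMap.comp_apply, hxy]
  rwa [mulVecLin_comp_cancel h1, LinearMap.id_apply, LinearMap.id_apply] at h2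

lemma isCompl_map {M₁ M₂ : Type*} [AddCommGroup M₁] [AddCommGroup M₂] [Module α M₁]
    [Module α M₂] (ψ : M₁ ≃ₗ[α] M₂) {p q : Submodule α M₁} (hpq : IsCompl p q) :
    IsCompl (p.map (ψ : M₁ →ₗ[α] M₂)) (q.map (ψ : M₁ →ₗ[α] M₂)) := by
  constructor
  · rw [Submodule.disjoint_def]
    intro x hx1 hx2
    obtain ⟨y, hy, rfl⟩ := hx1
    obtain ⟨z, hz, hzy⟩ := hx2
    have hzey : z = y := ψ.injective (by simpa using hzy)
    subst hzey
    have hmem : z ∈ p ⊓ q := ⟨hy, hz⟩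
    have hz0 : z = 0 := by simpa using hpq.disjoint.le_bot hmem
    simp [hz0]
  · rw [codisjoint_iff_le_sup]
    intro x _
    have hx : ψ (ψ.symm x) = x := ψ.apply_symm_apply x
    have hmem : ψ.symm x ∈ p ⊔ q := by rw [hpq.sup_eq_top]; trivial
    obtain ⟨y, hy, z, hz, hyz⟩ := Submodule.mem_sup.mp hmem
    rw [← hx, ← hyz, map_add]
    exact Submodule.add_mem_sup (Submodule.mem_map_of_mem hy) (Submodule.mem_map_of_mem hz)

/-- extension by zero, `(Fin h → α) →ₗ (Fin d → α)` -/
def extMap (hh : h ≤ d) : (Fin h → α) →ₗ[α] (Fin d → α) where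
  toFun v := fun i => if hi : (i : ℕ) < h then v ⟨(i : ℕ), hi⟩ else 0
  map_add' x y := by funext i; by_cases hi : (i : ℕ) < h <;> simp [hi]
  map_smul' c x := by funext i; by_cases hi : (i : ℕ) < h <;> simp [hi]

lemma extMap_injective (hh : h ≤ d) : Function.Injective (extMap (α := α) hh) := by
  intro x y hxy
  funext i
  have h1 := congrFun hxy (Fin.castLE hh i)
  simpa [extMap, i.isLt] using h1

lemma range_extMap (hh : h ≤ d) :
    LinearMap.range (extMap (α := α) hh) = Submodule.span α (Set.range fun i : Fin h =>
      Pi.single (M := fun _ : Fin d => α) (Fin.castLE hh i) 1) := by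
  ext w
  rw [mem_J0_iff hh, LinearMap.mem_range]
  constructor
  · rintro ⟨v, rfl⟩ i hi
    simp [extMap, Nat.not_lt.mpr hi]
  · intro hw
    refine ⟨fun i => w (Fin.castLE hh i), ?_⟩
    funext i
    by_cases hi : (i : ℕ) < h
    · have hcast : Fin.castLE hh ⟨(i : ℕ), hi⟩ = i := Fin.ext rfl
      simp [extMap, hi, hcast]
    · simp [extMap, hi, hw i (Nat.le_of_not_lt hi)]

lemma J0_basis (hh : h ≤ d) :
    Nonempty (Module.Basis (Fin h) α (Submodule.span α (Set.range fun i : Fin h =>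
      Pi.single (M := fun _ : Fin d => α) (Fin.castLE hh i) 1))) :=
  ⟨(Pi.basisFun α (Fin h)).map ((LinearEquiv.ofInjective _ (extMap_injective hh)).trans
    (LinearEquiv.ofEq _ _ (range_extMap hh)))⟩

lemma J0_isCompl (hh : h ≤ d) :
    IsCompl (Submodule.span α (Set.range fun i : Fin h =>
        Pi.single (M := fun _ : Fin d => α) (Fin.castLE hh i) 1))
      (Submodule.pi {i : Fin d | (i : ℕ) < h} (fun _ => (⊥ : Submodule α α))) := by
  constructor
  · rw [Submodule.disjoint_def]
    intro v h1 h2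
    rw [mem_J0_iff hh] at h1
    rw [Submodule.mem_pi] at h2
    funext i
    by_cases hi : (i : ℕ) < h
    · simpa using h2 i hi
    · simpa using h1 i (Nat.le_of_not_lt hi)
  · rw [codisjoint_iff_le_sup]
    intro v _
    rw [Submodule.mem_sup]
    refine ⟨fun i => if (i : ℕ) < h then v i else 0, ?_, fun i => if (i : ℕ) < h then 0 else v i,
      ?_, ?_⟩
    · rw [mem_J0_iff hh]
      intro i hi
      simp [Nat.not_lt.mpr hi]
    · rw [Submodule.mem_pi]
      intro i hi
      simp only [Set.mem_setOf_eq] at hi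
      simp [hi]
    · funext i
      by_cases hi : (i : ℕ) < h <;> simp [hi]

end Aux

set_option maxHeartbeats 10000000 in
theorem stmt5 {O : Type*} [CommRing O] [IsDomain O] [IsDiscreteValuationRing O]
    (ϖ : O) (hϖ : Irreducible ϖ) (d m h : ℕ) (hd : 1 ≤ d) (hm : 1 ≤ m) (hh : h ≤ d) :
    letI R := O ⧸ Ideal.span {ϖ ^ m}
    -- `K_m`, the kernel of the reduction map `GL_d(O) → GL_d(O/ϖ^m O)`
    letI Km : Set (GL (Fin d) O) :=
      ((Matrix.GeneralLinearGroup.map (n := Fin d) (Ideal.Quotient.mk (Ideal.span {ϖ ^ m}))).ker : Set (GL (Fin d) O))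
    -- `P_h(O)`: matrices whose lower-left `(d-h) × h` block vanishes
    letI Ph : Set (GL (Fin d) O) :=
      {p | ∀ i j : Fin d, h ≤ (i : ℕ) → (j : ℕ) < h → (p : Matrix (Fin d) (Fin d) O) i j = 0}
    -- `J⁰_{m,h}`, the span of the first `h` standard basis vectors
    letI J0 : Submodule R (Fin d → R) :=
      Submodule.span R (Set.range fun i : Fin h => Pi.single (Fin.castLE hh i) 1)
    ∃ f : DoubleCoset.Quotient Km Ph → Submodule R (Fin d → R),
      (∀ g : GL (Fin d) O,
        f (Quotient.mk (DoubleCoset.setoid Km Ph) g) =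
          Submodule.map
            (Matrix.mulVecLin
              ((g : Matrix (Fin d) (Fin d) O).map (Ideal.Quotient.mk (Ideal.span {ϖ ^ m}))))
            J0) ∧
      Function.Injective f ∧
      Set.range f = {J : Submodule R (Fin d → R) | (∃ N, IsCompl J N) ∧ Nonempty (Module.Basis (Fin h) R J)} := by
  classical
  set I : Ideal O := Ideal.span {ϖ ^ m} with hI
  set R : Type _ := O ⧸ I with hR
  set Km : Set (GL (Fin d) O) :=
    ((Matrix.GeneralLinearGroup.map (n := Fin d) (Ideal.Quotient.mk I)).ker :
      Set (GL (Fin d) O)) with hKm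
  set Ph : Set (GL (Fin d) O) :=
    {p | ∀ i j : Fin d, h ≤ (i : ℕ) → (j : ℕ) < h →
      (p : Matrix (Fin d) (Fin d) O) i j = 0} with hPh
  set J0 : Submodule R (Fin d → R) :=
    Submodule.span R (Set.range fun i : Fin h => Pi.single (Fin.castLE hh i) 1) with hJ0
  let mk : O →+* R := Ideal.Quotient.mk I
  have hϖm : ¬ IsUnit (ϖ ^ m) := fun hu =>
    hϖ.not_isUnit (isUnit_of_dvd_unit (dvd_pow_self ϖ (by omega)) hu)
  have hItop : I ≠ ⊤ := by
    rw [hI, Ne, Ideal.span_singleton_eq_top]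
    exact hϖm
  haveI : Nontrivial R := Ideal.Quotient.nontrivial_iff.mpr hItop
  haveI : IsLocalRing R :=
    IsLocalRing.of_surjective' (Ideal.Quotient.mk I) Ideal.Quotient.mk_surjective
  have hImax : I ≤ IsLocalRing.maximalIdeal O := by
    rw [hI, Ideal.span_le, Set.singleton_subset_iff, SetLike.mem_coe,
      IsLocalRing.mem_maximalIdeal, mem_nonunits_iff]
    exact hϖm
  have hlift : ∀ x : O, IsUnit (mk x) → IsUnit x := by
    intro x hx
    obtain ⟨b, hb⟩ := isUnit_iff_exists_inv.mp hx
    obtain ⟨y, rfl⟩ := Ideal.Quotient.mk_surjective b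
    have hmem : x * y - 1 ∈ I := by
      rw [← Ideal.Quotient.eq_zero_iff_mem]
      show mk (x * y - 1) = 0
      rw [map_sub, map_mul, map_one, hb, sub_self]
    have hz : x * y - 1 ∈ IsLocalRing.maximalIdeal O := hImax hmem
    have hxy : IsUnit (x * y) := by
      by_contra hnu
      have h1 : x * y ∈ IsLocalRing.maximalIdeal O := by
        rwa [IsLocalRing.mem_maximalIdeal, mem_nonunits_iff]
      have h2 : (1 : O) ∈ IsLocalRing.maximalIdeal O := by
        have := Submodule.sub_mem _ h1 hz
        simpa using this
      rw [IsLocalRing.mem_maximalIdeal, mem_nonunits_iff] at h2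
      exact h2 isUnit_one
    exact isUnit_of_mul_isUnit_left hxy
  have hliftmat : ∀ Mx : Matrix (Fin d) (Fin d) O, IsUnit (Mx.map mk).det → IsUnit Mx := by
    intro Mx hdet
    rw [Matrix.isUnit_iff_isUnit_det]
    exact hlift _ (by rw [RingHom.map_det]; exact hdet)
  let red : GL (Fin d) O →* GL (Fin d) R := Matrix.GeneralLinearGroup.map mk
  have hredc : ∀ g : GL (Fin d) O,
      ((red g : GL (Fin d) R) : Matrix (Fin d) (Fin d) R)
        = (g : Matrix (Fin d) (Fin d) O).map mk := fun g => rfl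
  have hUnit : ∀ g : GL (Fin d) O, IsUnit ((g : Matrix (Fin d) (Fin d) O).map mk) :=
    fun g => ⟨red g, hredc g⟩
  let KmSub : Subgroup (GL (Fin d) O) := red.ker
  let PhSub : Subgroup (GL (Fin d) O) :=
    { carrier := Ph
      one_mem' := by
        intro i j hi hj
        show ((1 : GL (Fin d) O) : Matrix (Fin d) (Fin d) O) i j = 0
        rw [Units.val_one]
        exact Matrix.one_apply_ne (Fin.ne_of_val_ne (by omega))
      mul_mem' := by
        intro a b ha hb i j hi hj
        show ((a * b : GL (Fin d) O) : Matrix (Fin d) (Fin d) O) i j = 0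
        rw [Units.val_mul, Matrix.mul_apply]
        apply Finset.sum_eq_zero
        intro k _
        by_cases hk : (k : ℕ) < h
        · rw [ha i k hi hk, zero_mul]
        · rw [hb k j (Nat.le_of_not_lt hk) hj, mul_zero]
      inv_mem' := by
        intro a ha i j hi hj
        show ((a⁻¹ : GL (Fin d) O) : Matrix (Fin d) (Fin d) O) i j = 0
        rw [Matrix.coe_units_inv]
        exact ll0_inv hh a.isUnit ha i j hi hj }
  have hrel : ∀ a b : GL (Fin d) O,
      (DoubleCoset.setoid Km Ph) a b ↔ ∃ k ∈ KmSub, ∃ p ∈ PhSub, b = k * a * p :=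
    fun a b => DoubleCoset.rel_iff (H := KmSub) (K := PhSub)
  let f0 : GL (Fin d) O → Submodule R (Fin d → R) :=
    fun g => Submodule.map ((g : Matrix (Fin d) (Fin d) O).map mk).mulVecLin J0
  have hPh_fix : ∀ p : GL (Fin d) O, p ∈ PhSub →
      Submodule.map ((p : Matrix (Fin d) (Fin d) O).map mk).mulVecLin J0 = J0 := by
    intro p hp
    refine map_J0_eq hh (hUnit p) ?_
    intro i j hi hj
    show mk ((p : Matrix (Fin d) (Fin d) O) i j) = 0
    rw [hp i j hi hj, map_zero]
  have hker_one : ∀ k : GL (Fin d) O, k ∈ KmSub →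
      (k : Matrix (Fin d) (Fin d) O).map mk = 1 := by
    intro k hk
    rw [← hredc k, MonoidHom.mem_ker.mp hk, Units.val_one]
  have hwd : ∀ a b : GL (Fin d) O, (DoubleCoset.setoid Km Ph) a b → f0 a = f0 b := by
    intro a b hab
    obtain ⟨k, hk, p, hp, rfl⟩ := (hrel a b).mp hab
    show f0 a = Submodule.map (((k * a * p : GL (Fin d) O) :
      Matrix (Fin d) (Fin d) O).map mk).mulVecLin J0
    rw [Units.val_mul, Units.val_mul, Matrix.map_mul, Matrix.map_mul, hker_one k hk, one_mul,
      Matrix.mulVecLin_mul, Submodule.map_comp, hPh_fix p hp]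
  refine ⟨Quotient.lift f0 hwd, fun g => rfl, ?_, ?_⟩
  · -- injectivity
    intro x y hxy
    obtain ⟨g, rfl⟩ := Quotient.exists_rep x
    obtain ⟨g', rfl⟩ := Quotient.exists_rep y
    have hfg : f0 g = f0 g' := hxy
    apply Quotient.sound
    refine (hrel g g').mpr ?_
    have hgu : g * (g⁻¹ * g') = g' := by group
    have h1 : ((g : Matrix (Fin d) (Fin d) O)).map mk *
        (((g⁻¹ * g' : GL (Fin d) O) : Matrix (Fin d) (Fin d) O)).map mk
        = ((g' : Matrix (Fin d) (Fin d) O)).map mk := by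
      rw [← Matrix.map_mul, ← Units.val_mul, hgu]
    have hU : Submodule.map (((g⁻¹ * g' : GL (Fin d) O) :
        Matrix (Fin d) (Fin d) O).map mk).mulVecLin J0 = J0 := by
      have h2 : Submodule.map ((g : Matrix (Fin d) (Fin d) O).map mk).mulVecLin
          (Submodule.map (((g⁻¹ * g' : GL (Fin d) O) :
            Matrix (Fin d) (Fin d) O).map mk).mulVecLin J0)
          = Submodule.map ((g : Matrix (Fin d) (Fin d) O).map mk).mulVecLin J0 := by
        rw [← Submodule.map_comp, ← Matrix.mulVecLin_mul, h1]
        exact hfg.symm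
      exact Submodule.map_injective_of_injective (mulVecLin_injective (hUnit g)) h2
    have hLL := ll0_of_map_le hh _ (le_of_eq hU)
    set u : GL (Fin d) O := g⁻¹ * g' with hu
    let pm : Matrix (Fin d) (Fin d) O := fun i j =>
      if h ≤ (i : ℕ) ∧ (j : ℕ) < h then 0 else (u : Matrix (Fin d) (Fin d) O) i j
    have hpm : pm.map mk = ((u : Matrix (Fin d) (Fin d) O)).map mk := by
      ext i j
      show mk (pm i j) = mk ((u : Matrix (Fin d) (Fin d) O) i j)
      by_cases hij : h ≤ (i : ℕ) ∧ (j : ℕ) < h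
      · rw [show pm i j = 0 from if_pos hij, map_zero]
        exact (hLL i j hij.1 hij.2).symm
      · rw [show pm i j = (u : Matrix (Fin d) (Fin d) O) i j from if_neg hij]
    have hpu : IsUnit pm :=
      hliftmat pm (by rw [hpm]; exact (Matrix.isUnit_iff_isUnit_det _).mp (hUnit u))
    have hPmem : hpu.unit ∈ PhSub := by
      intro i j hi hj
      show (hpu.unit : Matrix (Fin d) (Fin d) O) i j = 0
      rw [hpu.unit_spec]
      exact if_pos ⟨hi, hj⟩
    have hk0 : u * hpu.unit⁻¹ ∈ KmSub := by
      rw [MonoidHom.mem_ker]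
      have hPu : red hpu.unit = red u :=
        Units.ext (by rw [hredc, hredc, hpu.unit_spec, hpm])
      rw [map_mul, map_inv, hPu, mul_inv_cancel]
    have hnormal : KmSub.Normal := MonoidHom.normal_ker red
    refine ⟨g * (u * hpu.unit⁻¹) * g⁻¹, hnormal.conj_mem _ hk0 g, hpu.unit, hPmem, ?_⟩
    show g' = g * (g⁻¹ * g' * hpu.unit⁻¹) * g⁻¹ * g * hpu.unit
    group
  · -- range
    ext J
    simp only [Set.mem_range, Set.mem_setOf_eq]
    constructor
    · rintro ⟨x, rfl⟩
      obtain ⟨g, rfl⟩ := Quotient.exists_rep x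
      show (∃ N, IsCompl (f0 g) N) ∧ Nonempty (Module.Basis (Fin h) R (f0 g))
      set A : Matrix (Fin d) (Fin d) R := (g : Matrix (Fin d) (Fin d) O).map mk with hA
      have hu : IsUnit A := hUnit g
      have hdet := (Matrix.isUnit_iff_isUnit_det A).mp hu
      have h1 : A * A⁻¹ = 1 := Matrix.mul_nonsing_inv A hdet
      have h2 : A⁻¹ * A = 1 := Matrix.nonsing_inv_mul A hdet
      let ψ : (Fin d → R) ≃ₗ[R] (Fin d → R) :=
        LinearEquiv.ofLinear A.mulVecLin A⁻¹.mulVecLin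
          (mulVecLin_comp_cancel h1) (mulVecLin_comp_cancel h2)
      constructor
      · refine ⟨Submodule.map A.mulVecLin
          (Submodule.pi {i : Fin d | (i : ℕ) < h} fun _ => (⊥ : Submodule R R)), ?_⟩
        have hc := isCompl_map ψ (J0_isCompl (α := R) hh)
        exact hc
      · obtain ⟨b⟩ := J0_basis (α := R) hh
        exact ⟨b.map (Submodule.equivMapOfInjective A.mulVecLin
          (mulVecLin_injective hu) J0)⟩
    · rintro ⟨⟨N, hN⟩, ⟨bJ⟩⟩
      haveI : IsNoetherianRing R :=
        isNoetherianRing_of_surjective O R (Ideal.Quotient.mk I) Ideal.Quotient.mk_surjective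
      haveI hNfin : Module.Finite R N := Module.Finite.iff_fg.mpr (IsNoetherian.noetherian N)
      haveI hJfin : Module.Finite R J := Module.Finite.iff_fg.mpr (IsNoetherian.noetherian J)
      haveI : Module.Projective R (Fin d → R) :=
        Module.Projective.of_basis (Pi.basisFun R (Fin d))
      haveI : Module.Projective R N :=
        Module.Projective.of_split N.subtype
          (N.linearProjOfIsCompl J hN.symm) (Submodule.linearProjOfIsCompl_comp_subtype hN.symm)
      haveI : Module.FinitePresentation R N := Module.finitePresentation_of_finite R N
      haveI : Module.Free R J := Module.Free.of_basis bJ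
      haveI : Module.Free R N := Module.free_of_flat_of_isLocalRing
      -- rank computation
      have hrk : Module.finrank R N = d - h := by
        have e1 : Module.finrank R (Fin d → R) = d := by
          rw [Module.finrank_pi]
          simp
        have e2 : Module.finrank R (J × N) = Module.finrank R (Fin d → R) :=
          (Submodule.prodEquivOfIsCompl J N hN).finrank_eq
        rw [Module.finrank_prod, e1] at e2
        have e3 : Module.finrank R J = h := by
          rw [Module.finrank_eq_card_basis bJ, Fintype.card_fin]
        omega
      let cb := Module.Free.chooseBasis R N
      have hcard : Fintype.card (Module.Free.ChooseBasisIndex R N) = d - h := by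
        rw [← Module.finrank_eq_card_chooseBasisIndex, hrk]
      let bN : Module.Basis (Fin (d - h)) R N := cb.reindex (Fintype.equivFinOfCardEq hcard)
      let e : Fin h ⊕ Fin (d - h) ≃ Fin d :=
        finSumFinEquiv.trans (finCongr (Nat.add_sub_cancel' hh))
      let B : Module.Basis (Fin d) R (Fin d → R) :=
        (((bJ.prod bN).map (Submodule.prodEquivOfIsCompl J N hN))).reindex e
      let ψ : (Fin d → R) ≃ₗ[R] (Fin d → R) := (Pi.basisFun R (Fin d)).equiv B (Equiv.refl _)
      have hψB : ∀ i : Fin d, ψ (Pi.single i 1) = B i := by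
        intro i
        have := (Pi.basisFun R (Fin d)).equiv_apply (i := i) (b' := B) (e := Equiv.refl _)
        rwa [Pi.basisFun_apply, Equiv.refl_apply] at this
      have hBJ : ∀ i : Fin h, (B (Fin.castLE hh i) : Fin d → R) = (bJ i : Fin d → R) := by
        intro i
        have he : e (Sum.inl i) = Fin.castLE hh i := by
          apply Fin.ext
          simp [e]
        have : B (Fin.castLE hh i) =
            (Submodule.prodEquivOfIsCompl J N hN) ((bJ.prod bN) (Sum.inl i)) := by
          rw [← he]
          show (((bJ.prod bN).map (Submodule.prodEquivOfIsCompl J N hN))).reindex e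
            (e (Sum.inl i)) = _
          rw [Module.Basis.reindex_apply, Equiv.symm_apply_apply, Module.Basis.map_apply]
        rw [this]
        have hprod : (bJ.prod bN) (Sum.inl i) = (bJ i, 0) := by
          ext
          · rw [Module.Basis.prod_apply_inl_fst]
          · rw [Module.Basis.prod_apply_inl_snd]
        rw [hprod]
        show (J.subtype.coprod N.subtype) (bJ i, (0 : N)) = _
        simp
      have hmapJ : Submodule.map (ψ : (Fin d → R) →ₗ[R] (Fin d → R)) J0 = J := by
        rw [hJ0, Submodule.map_span]
        have himg : (ψ : (Fin d → R) →ₗ[R] (Fin d → R)) ''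
            (Set.range fun i : Fin h => Pi.single (Fin.castLE hh i) (1 : R))
            = Set.range fun i : Fin h => (bJ i : Fin d → R) := by
          rw [← Set.range_comp]
          have hfun : (⇑(ψ : (Fin d → R) →ₗ[R] (Fin d → R)) ∘ fun i : Fin h =>
              Pi.single (Fin.castLE hh i) (1 : R)) = fun i : Fin h => (bJ i : Fin d → R) := by
            funext i
            simp only [Function.comp_apply, LinearEquiv.coe_coe]
            rw [hψB, hBJ]
          rw [hfun]
        rw [himg]
        have hcomp : (fun i : Fin h => (bJ i : Fin d → R)) = (J.subtype ∘ bJ) := rfl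
        rw [hcomp, Set.range_comp, Submodule.span_image, bJ.span_eq, Submodule.map_subtype_top]
      let Mmat : Matrix (Fin d) (Fin d) R :=
        LinearMap.toMatrix' (ψ : (Fin d → R) →ₗ[R] (Fin d → R))
      have hMψ : Mmat.mulVecLin = (ψ : (Fin d → R) →ₗ[R] (Fin d → R)) := by
        rw [← Matrix.toLin'_apply', Matrix.toLin'_toMatrix']
      have hMu : IsUnit Mmat := by
        have hid1 : ((ψ : (Fin d → R) →ₗ[R] (Fin d → R)).comp
            (ψ.symm : (Fin d → R) →ₗ[R] (Fin d → R))) = LinearMap.id := by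
          ext v
          simp
        have hid2 : ((ψ.symm : (Fin d → R) →ₗ[R] (Fin d → R)).comp
            (ψ : (Fin d → R) →ₗ[R] (Fin d → R))) = LinearMap.id := by
          ext v
          simp
        refine ⟨⟨Mmat, LinearMap.toMatrix' (ψ.symm : (Fin d → R) →ₗ[R] (Fin d → R)), ?_, ?_⟩, rfl⟩
        · show Mmat * _ = 1
          rw [← LinearMap.toMatrix'_comp, hid1, LinearMap.toMatrix'_id]
        · show _ * Mmat = 1
          rw [← LinearMap.toMatrix'_comp, hid2, LinearMap.toMatrix'_id]
      obtain ⟨Amat, hAmat⟩ : ∃ Amat : Matrix (Fin d) (Fin d) O, Amat.map mk = Mmat := by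
        refine ⟨fun i j => (Ideal.Quotient.mk_surjective (Mmat i j)).choose, ?_⟩
        ext i j
        exact (Ideal.Quotient.mk_surjective (Mmat i j)).choose_spec
      have hAu : IsUnit Amat :=
        hliftmat Amat (by rw [hAmat]; exact (Matrix.isUnit_iff_isUnit_det Mmat).mp hMu)
      refine ⟨Quotient.mk (DoubleCoset.setoid Km Ph) hAu.unit, ?_⟩
      show Submodule.map ((hAu.unit : Matrix (Fin d) (Fin d) O).map mk).mulVecLin J0 = J
      rw [hAu.unit_spec, hAmat, hMψ, hmapJ]
end

section
/- The inclusion GL_d(O) ⊆ GL_d(F) induces a bijection of double coset spaces K_m\GL_d(O)/P_h(O) → K_m\GL_d(F)/P_h(F). -/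
open Matrix

section Aux

variable {d h : ℕ}

/-- The submodule of vectors supported in coordinates `< h`. -/
def Esub (R : Type*) [CommRing R] (d h : ℕ) : Submodule R (Fin d → R) where
  carrier := {v | ∀ i : Fin d, h ≤ (i : ℕ) → v i = 0}
  add_mem' := fun {a b} ha hb i hi => by simp [ha i hi, hb i hi]
  zero_mem' := fun i _ => rfl
  smul_mem' := fun c v hv i hi => by simp [hv i hi]

lemma mem_Esub {R : Type*} [CommRing R] {v : Fin d → R} :
    v ∈ Esub R d h ↔ ∀ i : Fin d, h ≤ (i : ℕ) → v i = 0 := Iff.rfl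

lemma single_mem_Esub {R : Type*} [CommRing R] {j : Fin d} (hj : (j : ℕ) < h) (x : R) :
    Pi.single j x ∈ Esub R d h := by
  intro i hi
  have hij : i ≠ j := by
    intro hij
    rw [hij] at hi
    omega
  exact Pi.single_eq_of_ne (M := fun _ : Fin d => R) hij x

lemma Esub_eq_span (K : Type*) [Field K] (hhd : h ≤ d) :
    Esub K d h =
      Submodule.span K (Set.range fun j : Fin h => Pi.single (M := fun _ : Fin d => K)
        (Fin.castLE hhd j) 1) := by
  classical
  refine le_antisymm ?_ ?_
  · intro v hv
    have hv' : v = ∑ i : Fin d, Pi.single i (v i) := (Finset.univ_sum_single v).symm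
    rw [hv']
    refine Submodule.sum_mem _ ?_
    intro i _
    by_cases hi : (i : ℕ) < h
    · have h1 : Pi.single (M := fun _ : Fin d => K) i (v i) = v i • Pi.single (M := fun _ : Fin d => K) i 1 := by
        rw [← Pi.single_smul, smul_eq_mul, mul_one]
      rw [h1]
      refine Submodule.smul_mem _ _ (Submodule.subset_span ⟨⟨(i : ℕ), hi⟩, ?_⟩)
      have : Fin.castLE hhd ⟨(i : ℕ), hi⟩ = i := Fin.ext rfl
      have h2 := congrArg (fun t : Fin d => Pi.single (M := fun _ : Fin d => K) t (1 : K)) this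
      simpa using h2
    · rw [hv i (not_lt.1 hi)]
      simp
  · rw [Submodule.span_le]
    rintro _ ⟨j, rfl⟩
    exact single_mem_Esub (R := K) (by simpa using j.2) (1 : K)

lemma finrank_Esub (K : Type*) [Field K] (hhd : h ≤ d) :
    Module.finrank K (Esub K d h) = h := by
  classical
  have hfam : (fun j : Fin h => Pi.single (M := fun _ : Fin d => K) (Fin.castLE hhd j) 1) =
      (⇑(Pi.basisFun K (Fin d)) ∘ Fin.castLE hhd) := by
    funext j
    simp [Pi.basisFun_apply]
  have hli : LinearIndependent K
      (fun j : Fin h => Pi.single (M := fun _ : Fin d => K) (Fin.castLE hhd j) 1) := by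
    rw [hfam]
    exact (Pi.basisFun K (Fin d)).linearIndependent.comp _ (Fin.castLE_injective hhd)
  rw [Esub_eq_span K hhd, finrank_span_eq_card hli, Fintype.card_fin]

end Aux

section Aux2

lemma mulVec_mem_Esub {K : Type*} [CommRing K] {d h : ℕ} {M : Matrix (Fin d) (Fin d) K}
    (hM : ∀ i j : Fin d, h ≤ (i : ℕ) → (j : ℕ) < h → M i j = 0)
    {v : Fin d → K} (hv : v ∈ Esub K d h) : M *ᵥ v ∈ Esub K d h := by
  intro i hi
  show ∑ k, M i k * v k = 0
  refine Finset.sum_eq_zero fun k _ => ?_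
  by_cases hk : (k : ℕ) < h
  · rw [hM i k hi hk, zero_mul]
  · rw [hv k (not_lt.1 hk), mul_zero]

lemma inv_mem_P {K : Type*} [Field K] {d h : ℕ} {u : GL (Fin d) K}
    (hu : ∀ i j : Fin d, h ≤ (i : ℕ) → (j : ℕ) < h → (u : Matrix (Fin d) (Fin d) K) i j = 0) :
    ∀ i j : Fin d, h ≤ (i : ℕ) → (j : ℕ) < h →
      ((↑(u⁻¹) : Matrix (Fin d) (Fin d) K)) i j = 0 := by
  classical
  set E := Esub K d h with hE
  have hmap : E.map (mulVecLin (u : Matrix (Fin d) (Fin d) K)) ≤ E := by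
    rintro _ ⟨v, hv, rfl⟩
    exact mulVec_mem_Esub hu hv
  let e : (Fin d → K) ≃ₗ[K] (Fin d → K) :=
    LinearEquiv.ofLinear (mulVecLin (u : Matrix (Fin d) (Fin d) K))
      (mulVecLin ((↑(u⁻¹) : Matrix (Fin d) (Fin d) K)))
      (by rw [← Matrix.mulVecLin_mul, ← Units.val_mul, mul_inv_cancel, Units.val_one,
            Matrix.mulVecLin_one])
      (by rw [← Matrix.mulVecLin_mul, ← Units.val_mul, inv_mul_cancel, Units.val_one,
            Matrix.mulVecLin_one])
  have hfe : Module.finrank K (E.map (e : (Fin d → K) →ₗ[K] (Fin d → K)))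
      = Module.finrank K E := LinearEquiv.finrank_map_eq e E
  have hecoe : (e : (Fin d → K) →ₗ[K] (Fin d → K))
      = mulVecLin (u : Matrix (Fin d) (Fin d) K) := rfl
  rw [hecoe] at hfe
  have heq : E.map (mulVecLin (u : Matrix (Fin d) (Fin d) K)) = E :=
    Submodule.eq_of_le_of_finrank_le hmap (le_of_eq hfe.symm)
  intro i j hi hj
  have h1 : Pi.single j (1 : K) ∈ E.map (mulVecLin (u : Matrix (Fin d) (Fin d) K)) := by
    rw [heq]
    exact single_mem_Esub hj 1
  obtain ⟨w, hw, hw2⟩ := h1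
  have h2 : (↑(u⁻¹) : Matrix (Fin d) (Fin d) K) *ᵥ Pi.single j (1 : K) = w := by
    rw [← hw2]
    show (↑(u⁻¹) : Matrix (Fin d) (Fin d) K) *ᵥ ((u : Matrix (Fin d) (Fin d) K) *ᵥ w) = w
    rw [mulVec_mulVec, ← Units.val_mul, inv_mul_cancel, Units.val_one, one_mulVec]
  have h3 := congrFun h2 i
  rw [mulVec_single_one] at h3
  simp only [mul_one, Matrix.col_apply] at h3
  rw [h3]
  exact hw i hi

end Aux2
section Aux3

variable {d h : ℕ}

lemma one_mem_P (R : Type*) [CommRing R] (i j : Fin d) (hi : h ≤ (i : ℕ)) (hj : (j : ℕ) < h) :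
    ((1 : GL (Fin d) R) : Matrix (Fin d) (Fin d) R) i j = 0 := by
  have hij : i ≠ j := by
    intro hij
    rw [hij] at hi
    omega
  rw [Units.val_one, Matrix.one_apply_ne hij]

lemma mul_mem_P {R : Type*} [CommRing R] {a b : GL (Fin d) R}
    (ha : ∀ i j : Fin d, h ≤ (i : ℕ) → (j : ℕ) < h → (a : Matrix (Fin d) (Fin d) R) i j = 0)
    (hb : ∀ i j : Fin d, h ≤ (i : ℕ) → (j : ℕ) < h → (b : Matrix (Fin d) (Fin d) R) i j = 0)
    (i j : Fin d) (hi : h ≤ (i : ℕ)) (hj : (j : ℕ) < h) :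
    ((a * b : GL (Fin d) R) : Matrix (Fin d) (Fin d) R) i j = 0 := by
  show ((a : Matrix (Fin d) (Fin d) R) * (b : Matrix (Fin d) (Fin d) R)) i j = 0
  rw [Matrix.mul_apply]
  refine Finset.sum_eq_zero fun k _ => ?_
  by_cases hk : (k : ℕ) < h
  · rw [ha i k hi hk, zero_mul]
  · rw [hb k j (not_lt.1 hk) hj, mul_zero]

/-- `P_h` as a subgroup of `GL d K`, over a field. -/
def PsubF (K : Type*) [Field K] (d h : ℕ) : Subgroup (GL (Fin d) K) where
  carrier := {p | ∀ i j : Fin d, h ≤ (i : ℕ) → (j : ℕ) < h →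
    (p : Matrix (Fin d) (Fin d) K) i j = 0}
  one_mem' := fun i j hi hj => one_mem_P K i j hi hj
  mul_mem' := fun {a b} ha hb => mul_mem_P ha hb
  inv_mem' := fun {a} ha => inv_mem_P ha

end Aux3
section Aux4

variable {d h : ℕ}

/-- `P_h` as a subgroup of `GL d O`, over a domain with a fraction field. -/
def PsubO (O : Type*) [CommRing O] [IsDomain O] (F : Type*) [Field F] [Algebra O F]
    [IsFractionRing O F] (d h : ℕ) : Subgroup (GL (Fin d) O) where
  carrier := {p | ∀ i j : Fin d, h ≤ (i : ℕ) → (j : ℕ) < h →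
    (p : Matrix (Fin d) (Fin d) O) i j = 0}
  one_mem' := fun i j hi hj => one_mem_P O i j hi hj
  mul_mem' := fun {a b} ha hb => mul_mem_P ha hb
  inv_mem' := by
    intro a ha i j hi hj
    have hinj : Function.Injective (algebraMap O F) := IsFractionRing.injective O F
    have h1 : ∀ i j : Fin d, h ≤ (i : ℕ) → (j : ℕ) < h →
        ((Matrix.GeneralLinearGroup.map (algebraMap O F) a : GL (Fin d) F) :
          Matrix (Fin d) (Fin d) F) i j = 0 := by
      intro i j hi hj
      have := Matrix.GeneralLinearGroup.map_apply (algebraMap O F) i j a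
      rw [show ((Matrix.GeneralLinearGroup.map (algebraMap O F) a : GL (Fin d) F) :
          Matrix (Fin d) (Fin d) F) i j
        = algebraMap O F ((a : Matrix (Fin d) (Fin d) O) i j) from this,
        ha i j hi hj, map_zero]
    have h2 := inv_mem_P h1 i j hi hj
    apply hinj
    rw [map_zero]
    rw [← Matrix.GeneralLinearGroup.map_apply (algebraMap O F) i j a⁻¹,
      Matrix.GeneralLinearGroup.map_inv]
    exact h2

theorem rel_iff' {G : Type*} [Group G] {H K : Subgroup G} {HS KS : Set G} (hH : HS = ↑H)
    (hK : KS = ↑K) {x y : G} :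
    DoubleCoset.setoid HS KS x y ↔ ∃ a ∈ H, ∃ b ∈ K, y = a * x * b := by
  subst hH
  subst hK
  exact DoubleCoset.rel_iff

end Aux4
section Aux5

theorem key_surj {O : Type*} [CommRing O] [IsDomain O] [IsDiscreteValuationRing O]
    {F : Type*} [Field F] [Algebra O F] [IsFractionRing O F] {d h : ℕ} (hhd : h ≤ d)
    (g : GL (Fin d) F) :
    ∃ u : GL (Fin d) O, ∀ i j : Fin d, h ≤ (i : ℕ) → (j : ℕ) < h →
      (((Matrix.GeneralLinearGroup.map (algebraMap O F) u)⁻¹ * g :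
        GL (Fin d) F) : Matrix (Fin d) (Fin d) F) i j = 0 := by
  classical
  have hinj : Function.Injective (algebraMap O F) := IsFractionRing.injective O F
  -- the coefficient-wise algebra map on vectors
  set φ : (Fin d → O) →ₗ[O] (Fin d → F) :=
    LinearMap.pi fun i => (Algebra.linearMap O F).comp (LinearMap.proj i) with hφdef
  have hφ : ∀ (v : Fin d → O) (i : Fin d), φ v i = algebraMap O F (v i) := fun v i => rfl
  set E : Submodule F (Fin d → F) := Esub F d h with hEdef
  -- `g` as a linear equivalence
  set e : (Fin d → F) ≃ₗ[F] (Fin d → F) :=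
    LinearEquiv.ofLinear (Matrix.mulVecLin (g : Matrix (Fin d) (Fin d) F))
      (Matrix.mulVecLin ((↑(g⁻¹) : Matrix (Fin d) (Fin d) F)))
      (by rw [← Matrix.mulVecLin_mul, ← Units.val_mul, mul_inv_cancel, Units.val_one,
            Matrix.mulVecLin_one])
      (by rw [← Matrix.mulVecLin_mul, ← Units.val_mul, inv_mul_cancel, Units.val_one,
            Matrix.mulVecLin_one]) with hedef
  set W : Submodule F (Fin d → F) := E.map (e : (Fin d → F) →ₗ[F] (Fin d → F)) with hWdef
  have hWrank : Module.finrank F W = h := by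
    rw [hWdef, LinearEquiv.finrank_map_eq e E, hEdef, finrank_Esub F hhd]
  set L : Submodule O (Fin d → O) := (W.restrictScalars O).comap φ with hLdef
  obtain ⟨n, snf⟩ := L.smithNormalForm (Pi.basisFun O (Fin d))
  set c : Fin d → (Fin d → F) := fun i => φ (snf.bM i) with hcdef
  -- `c` is linearly independent over `F`
  have hcli : LinearIndependent F c := by
    set U0 : Matrix (Fin d) (Fin d) O := (Pi.basisFun O (Fin d)).toMatrix ⇑snf.bM with hU0
    haveI : Invertible U0 := (Pi.basisFun O (Fin d)).invertibleToMatrix snf.bM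
    set C : Matrix (Fin d) (Fin d) F := U0.map (algebraMap O F) with hCdef
    haveI hCinv : Invertible C :=
      Invertible.map ((algebraMap O F).mapMatrix : Matrix (Fin d) (Fin d) O →+*
        Matrix (Fin d) (Fin d) F) U0
    have hC : ∀ jj : Fin d, (Matrix.mulVecLin C) (Pi.single jj 1) = c jj := by
      intro jj
      ext i
      rw [Matrix.mulVecLin_apply, Matrix.mulVec_single]
      show C i jj * 1 = c jj i
      rw [mul_one, hCdef, Matrix.map_apply, hU0, Module.Basis.toMatrix_apply, Pi.basisFun_repr, hcdef]
      exact (hφ _ _).symm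
    have hker : LinearMap.ker (Matrix.mulVecLin C) = ⊥ := by
      rw [LinearMap.ker_eq_bot]
      intro x y hxy
      have h5 := congrArg (fun v => (⅟C) *ᵥ v) hxy
      simpa only [Matrix.mulVecLin_apply, Matrix.mulVec_mulVec, invOf_mul_self,
        Matrix.one_mulVec] using h5
    have hcomp : c = (Matrix.mulVecLin C) ∘ ⇑(Pi.basisFun F (Fin d)) := by
      funext jj
      rw [Function.comp_apply, Pi.basisFun_apply]
      exact (hC jj).symm
    rw [hcomp]
    exact (Pi.basisFun F (Fin d)).linearIndependent.map' (Matrix.mulVecLin C) hker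
  -- the diagonal entries are nonzero
  have haneq : ∀ i : Fin n, snf.a i ≠ 0 := by
    intro i hai
    apply snf.bN.ne_zero i
    have h6 := snf.snf i
    rw [hai, zero_smul] at h6
    exact Subtype.ext h6
  -- `W` is the span of the `c (snf.f i)`
  have hW : W = Submodule.span F (Set.range (c ∘ ⇑snf.f)) := by
    have h1 : Submodule.span O (Set.range (L.subtype ∘ ⇑snf.bN)) = L := by
      rw [Set.range_comp, ← Submodule.map_span, snf.bN.span_eq, Submodule.map_subtype_top]
    have h2 : W = Submodule.span F (φ '' (L : Set (Fin d → O))) := by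
      refine le_antisymm ?_ ?_
      · intro w hw
        obtain ⟨b, hb⟩ := IsLocalization.exist_integer_multiples_of_finite
          (nonZeroDivisors O) w
        choose v hv using hb
        have hφv : φ v = algebraMap O F (b : O) • w := by
          funext i
          rw [hφ, hv i, Algebra.smul_def]
          rfl
        have hbne : algebraMap O F (b : O) ≠ 0 :=
          IsFractionRing.to_map_ne_zero_of_mem_nonZeroDivisors b.2
        have hvL : v ∈ L := by
          show φ v ∈ Submodule.restrictScalars O W
          rw [hφv]
          exact W.smul_mem _ hw
        have hww : w = (algebraMap O F (b : O))⁻¹ • φ v := by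
          rw [hφv, smul_smul, inv_mul_cancel₀ hbne, one_smul]
        rw [hww]
        exact Submodule.smul_mem _ _ (Submodule.subset_span ⟨v, hvL, rfl⟩)
      · rw [Submodule.span_le]
        rintro _ ⟨v, hv, rfl⟩
        exact hv
    have h8 : (φ ∘ L.subtype ∘ ⇑snf.bN) = fun i => algebraMap O F (snf.a i) • c (snf.f i) := by
      funext i
      show φ ((snf.bN i : Fin d → O)) = _
      rw [snf.snf i, _root_.map_smul, algebraMap_smul]
    have h9 : Submodule.span F (Set.range fun i : Fin n =>
          algebraMap O F (snf.a i) • c (snf.f i))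
        = Submodule.span F (Set.range (c ∘ ⇑snf.f)) := by
      refine le_antisymm ?_ ?_
      · rw [Submodule.span_le]
        rintro _ ⟨i, rfl⟩
        exact Submodule.smul_mem _ _ (Submodule.subset_span ⟨i, rfl⟩)
      · rw [Submodule.span_le]
        rintro _ ⟨i, rfl⟩
        have hne : algebraMap O F (snf.a i) ≠ 0 := fun h0 =>
          haneq i (hinj (by rw [h0, map_zero]))
        have hmem := Submodule.smul_mem (Submodule.span F (Set.range fun i : Fin n =>
            algebraMap O F (snf.a i) • c (snf.f i))) ((algebraMap O F (snf.a i))⁻¹)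
            (Submodule.subset_span ⟨i, rfl⟩)
        rw [smul_smul, inv_mul_cancel₀ hne, one_smul] at hmem
        exact hmem
    calc W = Submodule.span F (⇑φ '' ↑L) := h2
      _ = Submodule.span F (⇑φ '' ↑(Submodule.span O (Set.range (⇑L.subtype ∘ ⇑snf.bN)))) := by
            rw [h1]
      _ = Submodule.span F ↑(Submodule.map φ
            (Submodule.span O (Set.range (⇑L.subtype ∘ ⇑snf.bN)))) := by
            rw [Submodule.map_coe]
      _ = Submodule.span F ↑(Submodule.span O
            (⇑φ '' (Set.range (⇑L.subtype ∘ ⇑snf.bN)))) := by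
            rw [Submodule.map_span]
      _ = Submodule.span F (⇑φ '' (Set.range (⇑L.subtype ∘ ⇑snf.bN))) := by
            rw [Submodule.span_span_of_tower]
      _ = Submodule.span F (Set.range (⇑φ ∘ ⇑L.subtype ∘ ⇑snf.bN)) := by
            rw [← Set.range_comp]
      _ = Submodule.span F (Set.range fun i : Fin n =>
            algebraMap O F (snf.a i) • c (snf.f i)) := by rw [h8]
      _ = Submodule.span F (Set.range (c ∘ ⇑snf.f)) := h9
  have hn : n = h := by
    have h7 : Module.finrank F W = n := by
      rw [hW, finrank_span_eq_card (hcli.comp snf.f snf.f.injective), Fintype.card_fin]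
    rw [h7] at hWrank
    exact hWrank
  -- build a permutation of `Fin d` sending indices `< h` into the range of `snf.f`
  haveI : DecidablePred (· ∈ Set.range snf.f) := Classical.decPred _
  let e1 : Fin h ≃ {x : Fin d // (x : ℕ) < h} :=
    { toFun := fun j => ⟨⟨(j : ℕ), lt_of_lt_of_le j.2 hhd⟩, j.2⟩
      invFun := fun x => ⟨(x.1 : ℕ), x.2⟩
      left_inv := fun j => rfl
      right_inv := fun x => rfl }
  let e2 : Fin n ≃ Set.range snf.f := Equiv.ofInjective snf.f snf.f.injective
  let eq0 : {x : Fin d // (x : ℕ) < h} ≃ {x : Fin d // x ∈ Set.range snf.f} :=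
    e1.symm.trans ((finCongr hn.symm).trans e2)
  let σ : Equiv.Perm (Fin d) := eq0.extendSubtype
  have hσ1 : ∀ x : Fin d, (x : ℕ) < h → σ x ∈ Set.range snf.f := fun x hx =>
    Equiv.extendSubtype_mem eq0 x hx
  have hσ2 : ∀ x : Fin d, ¬((x : ℕ) < h) → σ x ∉ Set.range snf.f := fun x hx =>
    Equiv.extendSubtype_not_mem eq0 x hx
  -- the basis giving `u`
  let bu := snf.bM.reindex σ.symm
  let U : Matrix (Fin d) (Fin d) O := (Pi.basisFun O (Fin d)).toMatrix ⇑bu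
  haveI hUinv : Invertible U := (Pi.basisFun O (Fin d)).invertibleToMatrix bu
  let u : GL (Fin d) O := unitOfInvertible U
  have hUapp : ∀ i j, U i j = snf.bM (σ j) i := by
    intro i j
    show (Pi.basisFun O (Fin d)).repr (bu j) i = _
    rw [Pi.basisFun_repr, Module.Basis.reindex_apply, Equiv.symm_symm]
  refine ⟨u, ?_⟩
  set A : Matrix (Fin d) (Fin d) F :=
    ((Matrix.GeneralLinearGroup.map (algebraMap O F) u : GL (Fin d) F) :
      Matrix (Fin d) (Fin d) F) with hAdef
  have hA : ∀ i j, A i j = algebraMap O F (U i j) := fun i j => rfl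
  have hcolA : ∀ j : Fin d, A *ᵥ Pi.single j 1 = c (σ j) := by
    intro j
    funext i
    rw [Matrix.mulVec_single]
    show A i j * 1 = c (σ j) i
    rw [mul_one, hA, hUapp]
    exact (hφ _ _).symm
  have hgen : ∀ k : Fin n, c (snf.f k) ∈ W := by
    intro k
    rw [hW]
    exact Submodule.subset_span ⟨k, rfl⟩
  set B : Matrix (Fin d) (Fin d) F :=
    (((Matrix.GeneralLinearGroup.map (algebraMap O F) u)⁻¹ : GL (Fin d) F) :
      Matrix (Fin d) (Fin d) F) with hBdef
  have hBA : B * A = 1 := by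
    rw [hBdef, hAdef, ← Units.val_mul, inv_mul_cancel, Units.val_one]
  have hWB : ∀ w ∈ W, B *ᵥ w ∈ E := by
    have hle : W ≤ E.comap (Matrix.mulVecLin B) := by
      rw [hW, Submodule.span_le]
      rintro _ ⟨k, rfl⟩
      obtain ⟨j, hj, hjk⟩ : ∃ j : Fin d, (j : ℕ) < h ∧ σ j = snf.f k := by
        by_cases hjlt : ((σ.symm (snf.f k) : Fin d) : ℕ) < h
        · exact ⟨σ.symm (snf.f k), hjlt, σ.apply_symm_apply _⟩
        · exact absurd (⟨k, rfl⟩ : snf.f k ∈ Set.range snf.f) (by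
            simpa [σ.apply_symm_apply] using hσ2 _ hjlt)
      show Matrix.mulVecLin B ((c ∘ ⇑snf.f) k) ∈ E
      have hck : (c ∘ ⇑snf.f) k = c (snf.f k) := rfl
      rw [hck, ← hjk, ← hcolA j, Matrix.mulVecLin_apply, Matrix.mulVec_mulVec, hBA,
        Matrix.one_mulVec]
      exact single_mem_Esub hj 1
    intro w hw
    exact hle hw
  intro i j hi hj
  have hmem : (g : Matrix (Fin d) (Fin d) F) *ᵥ Pi.single j 1 ∈ W :=
    ⟨Pi.single j 1, single_mem_Esub hj 1, rfl⟩
  have h0 := hWB _ hmem i hi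
  have h10 : ((B * (g : Matrix (Fin d) (Fin d) F)) *ᵥ Pi.single j (1 : F)) i = 0 := by
    rw [← Matrix.mulVec_mulVec]
    exact h0
  rw [Matrix.mulVec_single] at h10
  show (B * (g : Matrix (Fin d) (Fin d) F)) i j = 0
  simpa using h10

end Aux5
theorem stmt7 {O : Type*} [CommRing O] [IsDomain O] [IsDiscreteValuationRing O]
    {F : Type*} [Field F] [Algebra O F] [IsFractionRing O F]
    (ϖ : O) (hϖ : Irreducible ϖ) (d m h : ℕ) (hd : 1 ≤ d) (hm : 1 ≤ m)
    (hh1 : 1 ≤ h) (hh2 : h ≤ d - 1) :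
    -- the inclusion `GL_d(O) → GL_d(F)`
    letI ι : GL (Fin d) O →* GL (Fin d) F := Matrix.GeneralLinearGroup.map (algebraMap O F)
    -- `K_m`, the kernel of the reduction map `GL_d(O) → GL_d(O/ϖ^m O)`
    letI Km : Set (GL (Fin d) O) :=
      ((Matrix.GeneralLinearGroup.map (n := Fin d)
        (Ideal.Quotient.mk (Ideal.span {ϖ ^ m}))).ker : Set (GL (Fin d) O))
    -- `P_h(O)` and `P_h(F)`: matrices whose lower-left `(d-h) × h` block vanishes
    letI PhO : Set (GL (Fin d) O) :=
      {p | ∀ i j : Fin d, h ≤ (i : ℕ) → (j : ℕ) < h → (p : Matrix (Fin d) (Fin d) O) i j = 0}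
    letI PhF : Set (GL (Fin d) F) :=
      {p | ∀ i j : Fin d, h ≤ (i : ℕ) → (j : ℕ) < h → (p : Matrix (Fin d) (Fin d) F) i j = 0}
    ∃ f : DoubleCoset.Quotient Km PhO → DoubleCoset.Quotient (ι '' Km) PhF,
      (∀ g : GL (Fin d) O,
        f (Quotient.mk (DoubleCoset.setoid Km PhO) g) =
          Quotient.mk (DoubleCoset.setoid (ι '' Km) PhF) (ι g)) ∧
      Function.Bijective f := by
  classical
  set ι : GL (Fin d) O →* GL (Fin d) F := Matrix.GeneralLinearGroup.map (algebraMap O F)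
    with hι
  set Km : Set (GL (Fin d) O) :=
    ((Matrix.GeneralLinearGroup.map (n := Fin d)
      (Ideal.Quotient.mk (Ideal.span {ϖ ^ m}))).ker : Set (GL (Fin d) O)) with hKmdef
  set PhO : Set (GL (Fin d) O) :=
    {p | ∀ i j : Fin d, h ≤ (i : ℕ) → (j : ℕ) < h →
      (p : Matrix (Fin d) (Fin d) O) i j = 0} with hPOdef
  set PhF : Set (GL (Fin d) F) :=
    {p | ∀ i j : Fin d, h ≤ (i : ℕ) → (j : ℕ) < h →
      (p : Matrix (Fin d) (Fin d) F) i j = 0} with hPFdef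
  have hinj : Function.Injective (algebraMap O F) := IsFractionRing.injective O F
  have hhd : h ≤ d := hh2.trans (Nat.sub_le d 1)
  set KmS : Subgroup (GL (Fin d) O) :=
    (Matrix.GeneralLinearGroup.map (n := Fin d)
      (Ideal.Quotient.mk (Ideal.span {ϖ ^ m}))).ker with hKmSdef
  have hKm : Km = ↑KmS := rfl
  have hPO : PhO = ↑(PsubO O F d h) := rfl
  have hPF : PhF = ↑(PsubF F d h) := rfl
  have hKF : ι '' Km = ↑(KmS.map ι) := (Subgroup.coe_map ι KmS).symm
  have resp : ∀ a b : GL (Fin d) O, DoubleCoset.setoid Km PhO a b →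
      DoubleCoset.setoid (ι '' Km) PhF (ι a) (ι b) := by
    intro a b hab
    rw [rel_iff' hKm hPO] at hab
    obtain ⟨k, hk, p, hp, rfl⟩ := hab
    rw [rel_iff' hKF hPF]
    refine ⟨ι k, Subgroup.mem_map_of_mem ι hk, ι p, ?_, by rw [_root_.map_mul, _root_.map_mul]⟩
    intro i j hi hj
    show (Matrix.GeneralLinearGroup.map (algebraMap O F) p :
      Matrix (Fin d) (Fin d) F) i j = 0
    rw [Matrix.GeneralLinearGroup.map_apply, hp i j hi hj, map_zero]
  refine ⟨fun q => Quotient.liftOn q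
      (fun x => Quotient.mk (DoubleCoset.setoid (ι '' Km) PhF) (ι x))
      (fun a b hab => Quotient.sound (resp a b hab)), fun g => rfl, ?_, ?_⟩
  · -- injectivity
    intro x y
    refine Quotient.inductionOn₂ x y ?_
    intro a b hxy
    have hrel : DoubleCoset.setoid (ι '' Km) PhF (ι a) (ι b) := Quotient.exact hxy
    rw [rel_iff' hKF hPF] at hrel
    obtain ⟨kf, hkf, p, hp, heq⟩ := hrel
    obtain ⟨k, hk, rfl⟩ := Subgroup.mem_map.mp hkf
    have hps : p = ι ((k * a)⁻¹ * b) := by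
      have h1 : p = (ι k * ι a)⁻¹ * ι b := by
        rw [heq]
        group
      rw [h1, _root_.map_mul, map_inv, _root_.map_mul]
    have hq : (k * a)⁻¹ * b ∈ PsubO O F d h := by
      intro i j hi hj
      apply hinj
      rw [map_zero, ← Matrix.GeneralLinearGroup.map_apply (algebraMap O F) i j ((k * a)⁻¹ * b)]
      have := hp i j hi hj
      rw [hps] at this
      exact this
    have hb : b = k * a * ((k * a)⁻¹ * b) := by group
    exact Quotient.sound ((rel_iff' hKm hPO).mpr ⟨k, hk, (k * a)⁻¹ * b, hq, hb⟩)
  · -- surjectivity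
    intro q
    refine Quotient.inductionOn q ?_
    intro G
    obtain ⟨u, hu⟩ := key_surj (O := O) hhd G
    refine ⟨Quotient.mk (DoubleCoset.setoid Km PhO) u, ?_⟩
    refine Quotient.sound ?_
    show DoubleCoset.setoid (ι '' Km) PhF (ι u) G
    rw [rel_iff' hKF hPF]
    refine ⟨1, (KmS.map ι).one_mem, (ι u)⁻¹ * G, hu, ?_⟩
    rw [one_mul, ← mul_assoc, mul_inv_cancel, one_mul]
end

section
/- The inclusion GL_d(F)^0 ⊆ GL_d(F) induces a bijection of double coset spaces K_m\GL_d(F)^0/P_h(F)^0 → K_m\GL_d(F)/P_h(F), where K_m ⊆ GL_d(F)^0 and P_h(F)^0 = P_h(F) ∩ GL_d(F)^0. -/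
/-!
The inclusion `GL_d(F)⁰ ⊆ GL_d(F)` induces a bijection of double coset spaces
`K_m \ GL_d(F)⁰ / P_h(F)⁰ → K_m \ GL_d(F) / P_h(F)`.
-/

/-- `GL_d(F)⁰`: the subgroup of `g ∈ GL_d(F)` such that `d` divides the normalized
valuation of `det g`; equivalently, `det g = ϖ^(d·k) · u` for some `k ∈ ℤ` and some
unit `u` of `O`. -/
def GLzero {O : Type*} [CommRing O] [IsDomain O] [IsDiscreteValuationRing O]
    {F : Type*} [Field F] [Algebra O F] [IsFractionRing O F]
    (ϖ : O) (hϖ : Irreducible ϖ) (d : ℕ) : Subgroup (GL (Fin d) F) where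
  carrier := {g | ∃ (k : ℤ) (u : Oˣ),
    (g : Matrix (Fin d) (Fin d) F).det =
      algebraMap O F ϖ ^ ((d : ℤ) * k) * algebraMap O F (u : O)}
  one_mem' := ⟨0, 1, by simp⟩
  mul_mem' := by
    rintro a b ⟨k, u, hk⟩ ⟨l, v, hl⟩
    have hϖ0 : algebraMap O F ϖ ≠ 0 :=
      (map_ne_zero_iff _ (IsFractionRing.injective O F)).mpr hϖ.ne_zero
    refine ⟨k + l, u * v, ?_⟩
    show ((a * b : GL (Fin d) F) : Matrix (Fin d) (Fin d) F).det = _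
    rw [Units.val_mul, Matrix.det_mul, hk, hl, mul_add, zpow_add₀ hϖ0, Units.val_mul, map_mul]
    ring
  inv_mem' := by
    rintro a ⟨k, u, hk⟩
    refine ⟨-k, u⁻¹, ?_⟩
    have h1 : ((a⁻¹ : GL (Fin d) F) : Matrix (Fin d) (Fin d) F).det *
        ((a : GL (Fin d) F) : Matrix (Fin d) (Fin d) F).det = 1 := by
      rw [← Matrix.det_mul, ← Units.val_mul, inv_mul_cancel]
      simp
    have h2 : ((a⁻¹ : GL (Fin d) F) : Matrix (Fin d) (Fin d) F).det =
        (((a : GL (Fin d) F) : Matrix (Fin d) (Fin d) F).det)⁻¹ :=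
      eq_inv_of_mul_eq_one_left h1
    rw [h2, hk, mul_inv, ← zpow_neg, map_units_inv, mul_neg]

section Aux

theorem doset_aux {G : Type*} [Group G] (Z H K : Subgroup G)
    (HS KS : Set G) (H0 K0 : Set Z)
    (hHS : HS = ↑H) (hKS : KS = ↑K)
    (hH0 : H0 = {g : Z | (g : G) ∈ HS}) (hK0 : K0 = {g : Z | (g : G) ∈ KS})
    (hsub : ∀ x ∈ H, x ∈ Z) (hsur : ∀ g : G, ∃ k ∈ K, g * k ∈ Z) :
    ∃ f : DoubleCoset.Quotient H0 K0 → DoubleCoset.Quotient HS KS,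
      (∀ g : Z, f (Quotient.mk (DoubleCoset.setoid H0 K0) g) =
          Quotient.mk (DoubleCoset.setoid HS KS) g.1) ∧
      Function.Bijective f := by
  subst hHS hKS hH0 hK0
  set H' : Subgroup Z := H.comap Z.subtype with hH'
  set K' : Subgroup Z := K.comap Z.subtype with hK'
  have eH : {g : Z | (g : G) ∈ (H : Set G)} = (H' : Set Z) := rfl
  have eK : {g : Z | (g : G) ∈ (K : Set G)} = (K' : Set Z) := rfl
  rw [eH, eK]
  have resp : ∀ a b : Z, (DoubleCoset.setoid (H' : Set Z) (K' : Set Z)) a b →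
      Quotient.mk (DoubleCoset.setoid (H : Set G) (K : Set G)) a.1 =
      Quotient.mk (DoubleCoset.setoid (H : Set G) (K : Set G)) b.1 := by
    intro a b hab
    obtain ⟨x, hx, y, hy, hxy⟩ := DoubleCoset.rel_iff.mp hab
    refine Quotient.sound (DoubleCoset.rel_iff.mpr ⟨x.1, hx, y.1, hy, ?_⟩)
    rw [hxy]; rfl
  refine ⟨Quotient.lift (fun z : Z =>
      Quotient.mk (DoubleCoset.setoid (H : Set G) (K : Set G)) z.1) resp,
    fun g => rfl, ?_, ?_⟩
  · intro q1 q2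
    refine Quotient.inductionOn₂ q1 q2 fun a b hab => ?_
    obtain ⟨x, hx, y, hy, hxy⟩ := DoubleCoset.rel_iff.mp (Quotient.exact hab)
    have hxZ : x ∈ Z := hsub x hx
    have hyZ : y ∈ Z := by
      have hy' : y = a.1⁻¹ * x⁻¹ * b.1 := by rw [hxy]; group
      rw [hy']
      exact Z.mul_mem (Z.mul_mem (Z.inv_mem a.2) (Z.inv_mem hxZ)) b.2
    refine Quotient.sound (DoubleCoset.rel_iff.mpr
      ⟨⟨x, hxZ⟩, ?_, ⟨y, hyZ⟩, ?_, Subtype.ext hxy⟩)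
    · exact hx
    · exact hy
  · intro q
    refine Quotient.inductionOn q fun g => ?_
    obtain ⟨k, hk, hz⟩ := hsur g
    refine ⟨Quotient.mk _ (⟨g * k, hz⟩ : Z), ?_⟩
    refine Quotient.sound (DoubleCoset.rel_iff.mpr ⟨1, H.one_mem, k⁻¹, K.inv_mem hk, ?_⟩)
    group

theorem exists_zpow_unit {O : Type*} [CommRing O] [IsDomain O] [IsDiscreteValuationRing O]
    {F : Type*} [Field F] [Algebra O F] [IsFractionRing O F]
    {ϖ : O} (hϖ : Irreducible ϖ) (x : F) (hx : x ≠ 0) :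
    ∃ (r : ℤ) (u : Oˣ), x = algebraMap O F ϖ ^ r * algebraMap O F (u : O) := by
  have hπ0 : algebraMap O F ϖ ≠ 0 :=
    (map_ne_zero_iff _ (IsFractionRing.injective O F)).mpr hϖ.ne_zero
  obtain ⟨a, b, hb, hab⟩ := IsFractionRing.div_surjective (A := O) x
  have hb0 : b ≠ 0 := nonZeroDivisors.ne_zero hb
  have ha0 : a ≠ 0 := by
    rintro rfl
    rw [map_zero, zero_div] at hab
    exact hx hab.symm
  obtain ⟨n, w, rfl⟩ := IsDiscreteValuationRing.eq_unit_mul_pow_irreducible ha0 hϖ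
  obtain ⟨n', w', rfl⟩ := IsDiscreteValuationRing.eq_unit_mul_pow_irreducible hb0 hϖ
  refine ⟨(n : ℤ) - n', w * w'⁻¹, ?_⟩
  have hw'0 : algebraMap O F (w' : O) ≠ 0 :=
    (map_ne_zero_iff _ (IsFractionRing.injective O F)).mpr w'.ne_zero
  rw [← hab, Units.val_mul, map_mul, map_mul, map_mul, map_pow, map_pow,
    zpow_sub₀ hπ0, zpow_natCast, zpow_natCast, map_units_inv]
  field_simp

end Aux

theorem stmt9 {O : Type*} [CommRing O] [IsDomain O] [IsDiscreteValuationRing O]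
    {F : Type*} [Field F] [Algebra O F] [IsFractionRing O F]
    (ϖ : O) (hϖ : Irreducible ϖ) (d m h : ℕ) (hd : 1 ≤ d) (hm : 1 ≤ m)
    (hh1 : 1 ≤ h) (hh2 : h ≤ d - 1) :
    -- the inclusion `GL_d(O) → GL_d(F)`
    letI ι : GL (Fin d) O →* GL (Fin d) F := Matrix.GeneralLinearGroup.map (algebraMap O F)
    -- `K_m` viewed inside `GL_d(F)`
    letI Km : Set (GL (Fin d) F) :=
      ι '' ((Matrix.GeneralLinearGroup.map (n := Fin d)
        (Ideal.Quotient.mk (Ideal.span {ϖ ^ m}))).ker : Set (GL (Fin d) O))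
    -- `P_h(F)`: matrices whose lower-left `(d-h) × h` block vanishes
    letI PhF : Set (GL (Fin d) F) :=
      {p | ∀ i j : Fin d, h ≤ (i : ℕ) → (j : ℕ) < h → (p : Matrix (Fin d) (Fin d) F) i j = 0}
    -- `K_m ⊆ GL_d(F)⁰` and `P_h(F)⁰ = P_h(F) ∩ GL_d(F)⁰`, viewed inside `GL_d(F)⁰`
    letI Km0 : Set (GLzero ϖ hϖ d) := {g | (g : GL (Fin d) F) ∈ Km}
    letI Ph0 : Set (GLzero ϖ hϖ d) := {g | (g : GL (Fin d) F) ∈ PhF}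
    ∃ f : DoubleCoset.Quotient Km0 Ph0 → DoubleCoset.Quotient Km PhF,
      (∀ g : GLzero ϖ hϖ d,
        f (Quotient.mk (DoubleCoset.setoid Km0 Ph0) g) =
          Quotient.mk (DoubleCoset.setoid Km PhF) g.1) ∧
      Function.Bijective f := by
  set ι : GL (Fin d) O →* GL (Fin d) F := Matrix.GeneralLinearGroup.map (algebraMap O F) with hι
  set Km : Set (GL (Fin d) F) :=
    ι '' ((Matrix.GeneralLinearGroup.map (n := Fin d)
      (Ideal.Quotient.mk (Ideal.span {ϖ ^ m}))).ker : Set (GL (Fin d) O)) with hKm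
  set PhF : Set (GL (Fin d) F) :=
    {p | ∀ i j : Fin d, h ≤ (i : ℕ) → (j : ℕ) < h → (p : Matrix (Fin d) (Fin d) F) i j = 0}
    with hPhF
  set Km0 : Set (GLzero ϖ hϖ d) := {g : GLzero ϖ hϖ d | g.1 ∈ Km} with hKm0
  set Ph0 : Set (GLzero ϖ hϖ d) := {g : GLzero ϖ hϖ d | g.1 ∈ PhF} with hPh0
  have hπ0 : algebraMap O F ϖ ≠ 0 :=
    (map_ne_zero_iff _ (IsFractionRing.injective O F)).mpr hϖ.ne_zero
  -- the block-triangularity weight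
  set b : Fin d → ℕ := fun i => if (i : ℕ) < h then 0 else 1 with hb
  have hbt : ∀ M : Matrix (Fin d) (Fin d) F,
      (∀ i j : Fin d, h ≤ (i : ℕ) → (j : ℕ) < h → M i j = 0) ↔ M.BlockTriangular b := by
    intro M
    constructor
    · intro hM i j hij
      simp only [hb] at hij
      by_cases h1 : (i : ℕ) < h <;> by_cases h2 : (j : ℕ) < h <;>
        simp [h1, h2] at hij ⊢ <;> exact hM i j (le_of_not_gt h1) h2
    · intro hM i j hi hj
      exact hM (by simp [hb, hi.not_gt, hj])
  -- `P_h(F)` as a subgroup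
  set PhS : Subgroup (GL (Fin d) F) :=
    { carrier := PhF
      one_mem' := by
        intro i j hi hj
        exact Matrix.one_apply_ne (by rintro rfl; omega)
      mul_mem' := by
        intro p q hp hq
        have : ((p : Matrix (Fin d) (Fin d) F) * q).BlockTriangular b :=
          Matrix.BlockTriangular.mul ((hbt _).mp hp) ((hbt _).mp hq)
        exact (hbt _).mpr this
      inv_mem' := by
        intro p hp
        have hInv : Invertible (p : Matrix (Fin d) (Fin d) F) := p.invertible
        have : ((p : Matrix (Fin d) (Fin d) F)⁻¹).BlockTriangular b :=
          Matrix.blockTriangular_inv_of_blockTriangular ((hbt _).mp hp)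
        have hco : ((p⁻¹ : GL (Fin d) F) : Matrix (Fin d) (Fin d) F) =
            (p : Matrix (Fin d) (Fin d) F)⁻¹ := Matrix.coe_units_inv p
        intro i j hi hj
        rw [hco]
        exact (hbt _).mpr this i j hi hj } with hPhS
  -- `K_m` as a subgroup
  set KmS : Subgroup (GL (Fin d) F) :=
    Subgroup.map ι (Matrix.GeneralLinearGroup.map (n := Fin d)
      (Ideal.Quotient.mk (Ideal.span {ϖ ^ m}))).ker with hKmS
  have hKmEq : Km = ↑KmS := (Subgroup.coe_map _ _).symm
  have hPhEq : PhF = ↑PhS := rfl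
  -- `K_m ⊆ GL⁰`
  have hsub : ∀ x ∈ KmS, x ∈ GLzero ϖ hϖ d := by
    intro x hx
    obtain ⟨k, -, rfl⟩ := hx
    refine ⟨0, Matrix.GeneralLinearGroup.det k, ?_⟩
    have h1 : ((ι k : GL (Fin d) F) : Matrix (Fin d) (Fin d) F) =
        (k : Matrix (Fin d) (Fin d) O).map (algebraMap O F) := rfl
    rw [h1, ← RingHom.mapMatrix_apply, ← RingHom.map_det]
    simp [Matrix.GeneralLinearGroup.val_det_apply]
  -- for every `g` there is `p ∈ P_h(F)` with `g * p ∈ GL⁰`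
  have hsur : ∀ g : GL (Fin d) F, ∃ p ∈ PhS, g * p ∈ GLzero ϖ hϖ d := by
    intro g
    have hdet0 : (g : Matrix (Fin d) (Fin d) F).det ≠ 0 := by
      have := (Matrix.GeneralLinearGroup.det g).ne_zero
      rwa [Matrix.GeneralLinearGroup.val_det_apply] at this
    obtain ⟨r, u, hru⟩ := exists_zpow_unit hϖ _ hdet0
    set i0 : Fin d := ⟨0, hd⟩ with hi0
    set e : Fin d → F := fun i => if i = i0 then algebraMap O F ϖ ^ (-r) else 1 with he
    have he0 : ∀ i, e i ≠ 0 := by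
      intro i
      simp only [he]
      split
      · exact zpow_ne_zero _ hπ0
      · exact one_ne_zero
    set P : GL (Fin d) F :=
      ⟨Matrix.diagonal e, Matrix.diagonal fun i => (e i)⁻¹, by
        rw [Matrix.diagonal_mul_diagonal,
          show (fun i => e i * (e i)⁻¹) = fun _ => (1 : F) from
            funext fun i => mul_inv_cancel₀ (he0 i), Matrix.diagonal_one], by
        rw [Matrix.diagonal_mul_diagonal,
          show (fun i => (e i)⁻¹ * e i) = fun _ => (1 : F) from
            funext fun i => inv_mul_cancel₀ (he0 i), Matrix.diagonal_one]⟩ with hP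
    have hPmem : P ∈ PhS := by
      intro i j hi hj
      exact Matrix.diagonal_apply_ne _ (by rintro rfl; omega)
    have hPdet : ((P : GL (Fin d) F) : Matrix (Fin d) (Fin d) F).det =
        algebraMap O F ϖ ^ (-r) := by
      show (Matrix.diagonal e).det = _
      rw [Matrix.det_diagonal]
      simp [he, Finset.prod_ite_eq']
    refine ⟨P, hPmem, 0, u, ?_⟩
    show ((g * P : GL (Fin d) F) : Matrix (Fin d) (Fin d) F).det = _
    rw [Units.val_mul, Matrix.det_mul, hru, hPdet, mul_zero, zpow_zero, one_mul,
      mul_comm (algebraMap O F ϖ ^ r), mul_assoc, ← zpow_add₀ hπ0]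
    simp
  have := doset_aux (GLzero ϖ hϖ d) KmS PhS Km PhF Km0 Ph0 hKmEq hPhEq rfl rfl hsub hsur
  exact this
end
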